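/- arXiv:1810.11228 — 8 statements merged into one kernel-verified Lean document; each statement's English description precedes it below -/
import Mathlib

section
/- Let A ∈ SL₂(ℝ) with A ≠ ±I and let 0 < α < π. Then A is conjugate in SL₂(ℝ) to the rotation matrix [[cos α, -sin α],[sin α, cos α]] if and only if tr A = 2 cos α and x ∧ Ax > 0 for every nonzero x ∈ ℝ². -/
open Matrix Real

abbrev SL2R := Matrix.SpecialLinearGroup (Fin 2) ℝ

def wedge (x y : Fin 2 → ℝ) : ℝ := x 0 * y 1 - x 1 * y 0

/-- Rotation matrix R(θ). -/
noncomputable def Rot (θ : ℝ) : Matrix (Fin 2) (Fin 2) ℝ :=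
  !![Real.cos θ, -Real.sin θ; Real.sin θ, Real.cos θ]

lemma wedge_mulVec (M : Matrix (Fin 2) (Fin 2) ℝ) (u v : Fin 2 → ℝ) :
    wedge (M.mulVec u) (M.mulVec v) = M.det * wedge u v := by
  simp [wedge, Matrix.mulVec, Matrix.det_fin_two, Fin.sum_univ_two, dotProduct]
  ring

theorem conj_rotation_iff (A : SL2R) (hA1 : A ≠ 1) (hA2 : A ≠ -1)
    (α : ℝ) (hα0 : 0 < α) (hαπ : α < π) :
    (∃ g : SL2R, A.val = g.val * Rot α * (g⁻¹).val) ↔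
      (A.val.trace = 2 * Real.cos α ∧
        ∀ x : Fin 2 → ℝ, x ≠ 0 → 0 < wedge x (A.val.mulVec x)) := by
  have hs : 0 < Real.sin α := Real.sin_pos_of_pos_of_lt_pi hα0 hαπ
  constructor
  · rintro ⟨g, hg⟩
    have hinv1 : (g⁻¹).val * g.val = 1 := by
      rw [← Matrix.SpecialLinearGroup.coe_mul, inv_mul_cancel]; rfl
    have hinv2 : g.val * (g⁻¹).val = 1 := by
      rw [← Matrix.SpecialLinearGroup.coe_mul, mul_inv_cancel]; rfl
    constructor
    · rw [hg, Matrix.trace_mul_cycle, hinv1, one_mul,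
        Matrix.trace_fin_two]
      simp [Rot]; ring
    · intro x hx
      set y := (g⁻¹).val.mulVec x with hy
      have hxy : x = g.val.mulVec y := by
        rw [hy, Matrix.mulVec_mulVec, hinv2, Matrix.one_mulVec]
      have hAx : A.val.mulVec x = g.val.mulVec ((Rot α).mulVec y) := by
        rw [hg, hy]
        simp only [Matrix.mulVec_mulVec, mul_assoc]
      have hyne : y ≠ 0 := by
        intro h
        apply hx
        rw [hxy, h, Matrix.mulVec_zero]
      rw [hAx, hxy, wedge_mulVec, g.prop, one_mul]
      have : wedge y ((Rot α).mulVec y) = Real.sin α * (y 0 ^ 2 + y 1 ^ 2) := by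
        simp [wedge, Rot, Matrix.mulVec, Fin.sum_univ_two, dotProduct, Matrix.vecHead, Matrix.vecTail]
        ring
      rw [this]
      have hy0 : y 0 ≠ 0 ∨ y 1 ≠ 0 := by
        by_contra h
        push_neg at h
        exact hyne (funext fun i => by fin_cases i <;> simp [h.1, h.2])
      have hpos : 0 < y 0 ^ 2 + y 1 ^ 2 := by
        rcases hy0 with h | h
        · positivity
        · positivity
      exact mul_pos hs hpos
  · rintro ⟨htr, hw⟩
    set a := A.val 0 0 with ha
    set b := A.val 0 1 with hb
    set c := A.val 1 0 with hc
    set d := A.val 1 1 with hd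
    set s := Real.sin α with hsd
    set k := Real.cos α with hkd
    have hdet : a * d - b * c = 1 := by
      have := A.prop
      rwa [Matrix.det_fin_two] at this
    have htr' : a + d = 2 * k := by rwa [Matrix.trace_fin_two] at htr
    have hcpos : 0 < c := by
      have h1 : (![1, 0] : Fin 2 → ℝ) ≠ 0 := by
        intro h
        have := congrFun h 0
        simp at this
      have := hw ![1, 0] h1
      simpa [wedge, Matrix.mulVec, Fin.sum_univ_two, dotProduct, Matrix.vecHead, Matrix.vecTail, ← hc] using this
    set t := Real.sqrt (s / c) with htdef
    have ht2 : t ^ 2 * c = s := by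
      rw [htdef, Real.sq_sqrt (by positivity)]
      field_simp
    have htpos : 0 < t := Real.sqrt_pos.mpr (by positivity)
    have hgdet : (!![t, t * (a - k) / s; 0, t * c / s] : Matrix (Fin 2) (Fin 2) ℝ).det = 1 := by
      rw [Matrix.det_fin_two_of]
      field_simp
      nlinarith [ht2]
    set g : SL2R := ⟨!![t, t * (a - k) / s; 0, t * c / s], hgdet⟩ with hgdef
    refine ⟨g, ?_⟩
    have hgval : g.val = !![t, t * (a - k) / s; 0, t * c / s] := rfl
    have hinv : (g⁻¹).val = !![t * c / s, -(t * (a - k) / s); -0, t] := by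
      rw [Matrix.SpecialLinearGroup.coe_inv, hgval]
      exact Matrix.adjugate_fin_two_of _ _ _ _
    have hA : A.val = !![a, b; c, d] := by
      rw [ha, hb, hc, hd]; exact Matrix.eta_fin_two A.val
    have hRot : Rot α = !![k, -s; s, k] := by rw [hsd, hkd]; rfl
    rw [hinv, hgval, hA, hRot, Matrix.mul_fin_two, Matrix.mul_fin_two]
    have hpy : s ^ 2 + k ^ 2 = 1 := by
      rw [hsd, hkd]; exact Real.sin_sq_add_cos_sq α
    have hsne : s ≠ 0 := ne_of_gt hs
    have hcne : c ≠ 0 := ne_of_gt hcpos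
    ext i j
    fin_cases i <;> fin_cases j <;> simp <;> field_simp
    · linear_combination (-a) * ht2
    · apply mul_left_cancel₀ hcne
      linear_combination ((a-k)^2+s^2) * ht2 - s*hdet + s*a*htr' + s*hpy
    · linear_combination (-1) * ht2
    · linear_combination (a - 2*k) * ht2 + s * htr'
end

section
/- Let A, B ∈ SL₂(ℝ). Suppose tr A = 2 cos α for some α ∈ [0, π] and x ∧ Ax ≥ 0 for all x ∈ ℝ², and suppose B has a real eigenvector with positive eigenvalue that is not an eigenvector of A. Then there exists a vector v ∈ ℝ² with v ∧ (AB)v > 0; in particular AB is not equal to ±I, and AB does not satisfy x ∧ (AB)x ≤ 0 for all x. -/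
open Matrix Real

theorem lemma_product_positive_wedge (A B : SL2R) (α : ℝ)
    (hα : α ∈ Set.Icc 0 π)
    (htr : A.val.trace = 2 * Real.cos α)
    (hwA : ∀ x : Fin 2 → ℝ, 0 ≤ wedge x (A.val.mulVec x))
    (v : Fin 2 → ℝ) (hv : v ≠ 0) (lam : ℝ) (hlam : 0 < lam)
    (hBv : B.val.mulVec v = lam • v)
    (hnotA : ¬ ∃ μ : ℝ, A.val.mulVec v = μ • v) :
    (∃ w : Fin 2 → ℝ, 0 < wedge w ((A * B).val.mulVec w)) ∧
    A * B ≠ 1 ∧ A * B ≠ -1 ∧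
    ¬ (∀ x : Fin 2 → ℝ, wedge x ((A * B).val.mulVec x) ≤ 0) := by
  set u := A.val.mulVec v with hu
  have hwv : wedge v u ≠ 0 := by
    intro h0
    apply hnotA
    have hkey : v 0 * u 1 = v 1 * u 0 := by
      have := h0
      unfold wedge at this
      linarith
    rcases Function.ne_iff.mp hv with ⟨i, hi⟩
    simp only [Pi.zero_apply] at hi
    fin_cases i
    · have hi' : v 0 ≠ 0 := by simpa using hi
      refine ⟨u 0 / v 0, ?_⟩
      funext j
      fin_cases j <;> simp [Pi.smul_apply, smul_eq_mul] <;>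
        field_simp <;> linarith
    · have hi' : v 1 ≠ 0 := by simpa using hi
      refine ⟨u 1 / v 1, ?_⟩
      funext j
      fin_cases j <;> simp [Pi.smul_apply, smul_eq_mul] <;>
        field_simp <;> linarith
  have hwpos : 0 < wedge v u := lt_of_le_of_ne (hwA v) (Ne.symm hwv)
  have hABv : (A * B).val.mulVec v = lam • u := by
    have : (A * B).val = A.val * B.val := rfl
    rw [this, ← Matrix.mulVec_mulVec, hBv, Matrix.mulVec_smul]
  have hmain : 0 < wedge v ((A * B).val.mulVec v) := by
    rw [hABv]
    have : wedge v (lam • u) = lam * wedge v u := by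
      unfold wedge; simp [Pi.smul_apply, smul_eq_mul]; ring
    rw [this]
    positivity
  refine ⟨⟨v, hmain⟩, ?_, ?_, ?_⟩
  · intro h
    rw [h] at hmain
    simp only [Matrix.SpecialLinearGroup.coe_one, Matrix.one_mulVec] at hmain
    unfold wedge at hmain
    linarith
  · intro h
    rw [h] at hmain
    have : ((-1 : SL2R)).val.mulVec v = -v := by
      simp [Matrix.neg_mulVec]
    rw [this] at hmain
    unfold wedge at hmain
    simp at hmain
    linarith
  · intro h
    exact absurd (h v) (not_le.mpr hmain)
end

section
/- Let 0 < α, β < π, let A ∈ C₃^α and B ∈ C₃^β, and suppose tr(AB) = 2 cos(α+β). Then AB ∈ C₃^{α+β}; i.e., AB is conjugate in SL₂(ℝ) to the rotation matrix R(α+β). -/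
open Matrix Real

/-- The conjugacy class C₃^θ of the rotation R(θ) in SL₂(ℝ). -/
noncomputable def C3 (θ : ℝ) : Set SL2R :=
  {A | ∃ g : SL2R, A.val = g.val * Rot θ * (g⁻¹).val}

lemma rot_det (θ : ℝ) : (Rot θ).det = 1 := by
  simp [Rot, Matrix.det_fin_two_of]
  nlinarith [Real.sin_sq_add_cos_sq θ]

noncomputable def RotSL (θ : ℝ) : SL2R := ⟨Rot θ, rot_det θ⟩

lemma RotSL_val (θ : ℝ) : (RotSL θ).val = Rot θ := rfl

lemma rot_mul (θ₁ θ₂ : ℝ) : Rot θ₁ * Rot θ₂ = Rot (θ₁ + θ₂) := by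
  simp [Rot, Real.cos_add, Real.sin_add]
  constructor <;> ring

lemma key (α β : ℝ) (hsα : 0 < Real.sin α) (hsβ : 0 < Real.sin β)
    (k : SL2R)
    (htr : (Rot α * (k.val * Rot β * (k⁻¹).val)).trace = 2 * Real.cos (α + β)) :
    k.val * Rot β * (k⁻¹).val = Rot β := by
  set a := k.val 0 0 with ha
  set b := k.val 0 1 with hb
  set c := k.val 1 0 with hc
  set d := k.val 1 1 with hd
  have hk : k.val = !![a, b; c, d] := by
    rw [ha, hb, hc, hd]; exact Matrix.etaExpand_eq k.val |>.symm
  have hdet : a * d - b * c = 1 := by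
    have := k.2
    rw [Matrix.det_fin_two] at this
    exact this
  have hkinv : (k⁻¹).val = !![d, -b; -c, a] := by
    rw [Matrix.SpecialLinearGroup.coe_inv, hk, Matrix.adjugate_fin_two]
    simp
  rw [hk, hkinv] at htr ⊢
  rw [Real.cos_add] at htr
  simp [Rot, Matrix.mul_fin_two, Matrix.trace_fin_two_of] at htr
  have hpos : 0 < Real.sin α * Real.sin β := mul_pos hsα hsβ
  have key2 : Real.sin α * Real.sin β * (a ^ 2 + b ^ 2 + c ^ 2 + d ^ 2 - 2) = 0 := by
    linear_combination (2 * Real.cos α * Real.cos β) * hdet - htr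
  have hsum : a ^ 2 + b ^ 2 + c ^ 2 + d ^ 2 = 2 := by
    rcases mul_eq_zero.1 key2 with h | h
    · exact absurd h (ne_of_gt hpos)
    · linarith
  have hda : d = a := by nlinarith [sq_nonneg (a - d), sq_nonneg (b + c)]
  have hcb : c = -b := by nlinarith [sq_nonneg (a - d), sq_nonneg (b + c)]
  rw [hda, hcb] at hdet ⊢
  have h1 : a ^ 2 + b ^ 2 = 1 := by linear_combination hdet
  ext i j
  fin_cases i <;> fin_cases j <;>
    simp [Rot, Matrix.mul_fin_two] <;>
    first
      | linear_combination Real.cos β * h1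
      | linear_combination Real.sin β * h1
      | linear_combination (-Real.sin β) * h1

theorem prod_mem_C3_add (α β : ℝ) (hα : α ∈ Set.Ioo 0 π) (hβ : β ∈ Set.Ioo 0 π)
    (A B : SL2R) (hA : A ∈ C3 α) (hB : B ∈ C3 β)
    (htr : (A * B).val.trace = 2 * Real.cos (α + β)) :
    A * B ∈ C3 (α + β) := by
  obtain ⟨g, hg⟩ := hA
  obtain ⟨h, hh⟩ := hB
  have hA' : A = g * RotSL α * g⁻¹ := Subtype.ext (by simpa [RotSL_val, Matrix.SpecialLinearGroup.coe_mul] using hg)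
  have hB' : B = h * RotSL β * h⁻¹ := Subtype.ext (by simpa [RotSL_val, Matrix.SpecialLinearGroup.coe_mul] using hh)
  set k : SL2R := g⁻¹ * h with hkdef
  have hAB : A * B = g * (RotSL α * (k * RotSL β * k⁻¹)) * g⁻¹ := by
    rw [hA', hB', hkdef]; group
  have hsα : 0 < Real.sin α := Real.sin_pos_of_pos_of_lt_pi hα.1 hα.2
  have hsβ : 0 < Real.sin β := Real.sin_pos_of_pos_of_lt_pi hβ.1 hβ.2
  have htr' : (Rot α * (k.val * Rot β * (k⁻¹).val)).trace = 2 * Real.cos (α + β) := by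
    have : (A * B).val = g.val * (Rot α * (k.val * Rot β * (k⁻¹).val)) * (g⁻¹).val := by
      rw [hAB]
      simp [RotSL_val, Matrix.SpecialLinearGroup.coe_mul, Matrix.mul_assoc]
    rw [this] at htr
    rw [Matrix.trace_mul_cycle] at htr
    have hginv : (g⁻¹).val * g.val = 1 := by
      rw [Matrix.SpecialLinearGroup.coe_inv, Matrix.adjugate_mul, g.2, one_smul]
    rw [hginv, Matrix.one_mul] at htr
    exact htr
  have hkey := key α β hsα hsβ k htr'
  refine ⟨g, ?_⟩
  rw [hAB]
  simp only [Matrix.SpecialLinearGroup.coe_mul]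
  congr 1
  congr 1
  show Rot α * (k.val * Rot β * (k⁻¹).val) = Rot (α + β)
  rw [hkey, rot_mul]
end

section
/- Let 0 < α < π. Then {tr(AB) : A ∈ C₃^α, B ∈ C₂^{++}} = (-∞, 2 cos α), and {tr(AB) : A ∈ C₃^α, B ∈ C₂^{+-}} = (2 cos α, ∞). -/
open Matrix Real

/-- C₂^{++}: the conjugacy class of [[1,0],[1,1]]. -/
def C2pp : Set SL2R := {A | ∃ g : SL2R, A.val = g.val * !![1, 0; 1, 1] * (g⁻¹).val}

/-- C₂^{+-}: the conjugacy class of [[1,0],[-1,1]]. -/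
def C2pm : Set SL2R := {A | ∃ g : SL2R, A.val = g.val * !![1, 0; -1, 1] * (g⁻¹).val}

lemma Jdet (ε : ℝ) : Matrix.det !![(1:ℝ), 0; ε, 1] = 1 := by
  simp [Matrix.det_fin_two_of]

def Jsl (ε : ℝ) : SL2R := ⟨!![(1:ℝ), 0; ε, 1], Jdet ε⟩

lemma coe_mul_inv (g : SL2R) : g.val * (g⁻¹).val = 1 := by
  rw [← Matrix.SpecialLinearGroup.coe_mul, mul_inv_cancel]; rfl

lemma coe_inv_mul (g : SL2R) : (g⁻¹).val * g.val = 1 := by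
  rw [← Matrix.SpecialLinearGroup.coe_mul, inv_mul_cancel]; rfl

lemma key_trace (θ ε : ℝ) (k : SL2R) :
    (Rot θ * (k.val * !![(1:ℝ), 0; ε, 1] * (k⁻¹).val)).trace
      = 2 * Real.cos θ - ε * Real.sin θ * ((k.val 0 1)^2 + (k.val 1 1)^2) := by
  have hdet : k.val 0 0 * k.val 1 1 - k.val 0 1 * k.val 1 0 = 1 := by
    have := k.2; rwa [Matrix.det_fin_two] at this
  rw [Matrix.SpecialLinearGroup.coe_inv, Matrix.adjugate_fin_two]
  simp only [Rot, Matrix.trace_fin_two, Matrix.mul_apply, Fin.sum_univ_two,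
    Matrix.cons_val_zero, Matrix.cons_val_one, Matrix.head_cons, Matrix.of_apply,
    Matrix.cons_val', Matrix.head_fin_const, Matrix.empty_val', Matrix.cons_val_fin_one]
  linear_combination (2 * Real.cos θ) * hdet

lemma pos_col (k : SL2R) : 0 < (k.val 0 1)^2 + (k.val 1 1)^2 := by
  have hdet : k.val 0 0 * k.val 1 1 - k.val 0 1 * k.val 1 0 = 1 := by
    have := k.2; rwa [Matrix.det_fin_two] at this
  by_contra h
  push_neg at h
  have h1 : k.val 0 1 = 0 := by nlinarith [sq_nonneg (k.val 0 1), sq_nonneg (k.val 1 1)]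
  have h2 : k.val 1 1 = 0 := by nlinarith [sq_nonneg (k.val 0 1), sq_nonneg (k.val 1 1)]
  rw [h1, h2] at hdet
  norm_num at hdet

lemma exists_col (s : ℝ) (hs : 0 < s) : ∃ k : SL2R, (k.val 0 1)^2 + (k.val 1 1)^2 = s := by
  have hs' : Real.sqrt s ≠ 0 := by positivity
  refine ⟨⟨!![(Real.sqrt s)⁻¹, 0; 0, Real.sqrt s], by
    simp [Matrix.det_fin_two_of]
    field_simp⟩, ?_⟩
  simp [Real.sq_sqrt hs.le]

lemma set_eq (θ ε : ℝ)
    (C : Set SL2R) (hC : C = {A | ∃ g : SL2R, A.val = g.val * !![(1:ℝ),0;ε,1] * (g⁻¹).val}) :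
    {t : ℝ | ∃ A ∈ C3 θ, ∃ B ∈ C, t = (A * B).val.trace} =
      {t : ℝ | ∃ k : SL2R, t = 2 * Real.cos θ - ε * Real.sin θ * ((k.val 0 1)^2 + (k.val 1 1)^2)} := by
  subst hC
  ext t
  simp only [Set.mem_setOf_eq]
  constructor
  · rintro ⟨A, ⟨g, hg⟩, B, ⟨h, hh⟩, rfl⟩
    refine ⟨g⁻¹ * h, ?_⟩
    have e1 : (A * B).val = g.val * (Rot θ * ((g⁻¹*h).val * !![(1:ℝ),0;ε,1] * ((g⁻¹*h)⁻¹).val)) * (g⁻¹).val := by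
      have hk : ((g⁻¹*h) : SL2R).val = (g⁻¹).val * h.val := by simp
      have hk' : (((g⁻¹*h)⁻¹ : SL2R)).val = (h⁻¹).val * g.val := by
        rw [_root_.mul_inv_rev, inv_inv]; simp
      rw [Matrix.SpecialLinearGroup.coe_mul, hg, hh, hk, hk']
      simp only [Matrix.mul_assoc, coe_mul_inv g, Matrix.mul_one]
    rw [← key_trace θ ε (g⁻¹*h), e1, Matrix.trace_mul_comm, ← Matrix.mul_assoc,
      coe_inv_mul g, Matrix.one_mul]
  · rintro ⟨k, rfl⟩
    refine ⟨RotSL θ, ⟨1, by simp [RotSL]⟩, k * Jsl ε * k⁻¹, ⟨k, by rw [Matrix.SpecialLinearGroup.coe_mul, Matrix.SpecialLinearGroup.coe_mul]; rfl⟩, ?_⟩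
    have hval : ((RotSL θ * (k * Jsl ε * k⁻¹)).val)
        = Rot θ * (k.val * !![(1:ℝ),0;ε,1] * (k⁻¹).val) := by
      rfl
    rw [hval, key_trace]

theorem trace_range_C3_mul_C2 (α : ℝ) (hα : α ∈ Set.Ioo 0 π) :
    {t : ℝ | ∃ A ∈ C3 α, ∃ B ∈ C2pp, t = (A * B).val.trace} =
      Set.Iio (2 * Real.cos α) ∧
    {t : ℝ | ∃ A ∈ C3 α, ∃ B ∈ C2pm, t = (A * B).val.trace} =
      Set.Ioi (2 * Real.cos α) := by
  obtain ⟨h0, hπ⟩ := hα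
  have hsin : 0 < Real.sin α := Real.sin_pos_of_pos_of_lt_pi h0 hπ
  constructor
  · rw [set_eq α 1 C2pp (by norm_num [C2pp])]
    ext t
    simp only [Set.mem_setOf_eq, Set.mem_Iio]
    constructor
    · rintro ⟨k, rfl⟩
      nlinarith [pos_col k]
    · intro ht
      obtain ⟨k, hk⟩ := exists_col ((2 * Real.cos α - t) / Real.sin α)
        (div_pos (by linarith) hsin)
      exact ⟨k, by rw [hk]; field_simp; ring⟩
  · rw [set_eq α (-1) C2pm (by norm_num [C2pm])]
    ext t
    simp only [Set.mem_setOf_eq, Set.mem_Ioi]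
    constructor
    · rintro ⟨k, rfl⟩
      nlinarith [pos_col k]
    · intro ht
      obtain ⟨k, hk⟩ := exists_col ((t - 2 * Real.cos α) / Real.sin α)
        (div_pos (by linarith) hsin)
      refine ⟨k, by rw [hk]; field_simp; ring⟩
end

section
/- In SL₂(ℝ): {tr(AB) : A, B ∈ C₂^{++}} = (-∞, 2], {tr(AB) : A, B ∈ C₂^{+-}} = (-∞, 2], and {tr(AB) : A ∈ C₂^{++}, B ∈ C₂^{+-}} = [2, ∞). -/
open Matrix

lemma key_trace_s9 (a b c d s t : ℝ) (h : a*d - b*c = 1) :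
    (!![1,0;s,1] * !![a,b;c,d] * !![1,0;t,1] * !![d,-b;-c,a]).trace = 2 - s*t*b^2 := by
  simp [Matrix.mul_fin_two, Matrix.trace_fin_two]
  linear_combination 2*h

lemma inv_val (M : SL2R) :
    (M⁻¹).val = !![M.val 1 1, -M.val 0 1; -M.val 1 0, M.val 0 0] := by
  rw [Matrix.SpecialLinearGroup.coe_inv, Matrix.adjugate_fin_two]

lemma trace_conj (s t : ℝ) (g h : SL2R) :
    (g.val * !![1,0;s,1] * (g⁻¹).val * (h.val * !![1,0;t,1] * (h⁻¹).val)).trace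
      = 2 - s*t*((g⁻¹*h).val 0 1)^2 := by
  set M := g⁻¹ * h with hM
  have h1 : (g⁻¹).val * h.val = M.val := by simp [hM]
  have h2 : (h⁻¹).val * g.val = (M⁻¹).val := by simp [hM, _root_.mul_inv_rev]
  have e : (g.val * !![1,0;s,1] * (g⁻¹).val * (h.val * !![1,0;t,1] * (h⁻¹).val)).trace
      = (!![1,0;s,1] * M.val * !![1,0;t,1] * (M⁻¹).val).trace := by
    rw [show g.val * !![1,0;s,1] * (g⁻¹).val * (h.val * !![1,0;t,1] * (h⁻¹).val)
        = g.val * (!![1,0;s,1] * ((g⁻¹).val * h.val) * !![1,0;t,1] * (h⁻¹).val) by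
      noncomm_ring]
    rw [Matrix.trace_mul_comm]
    rw [h1]
    rw [show !![1,0;s,1] * M.val * !![1,0;t,1] * (h⁻¹).val * g.val
        = !![1,0;s,1] * M.val * !![1,0;t,1] * ((h⁻¹).val * g.val) by noncomm_ring, h2]
  have hd : M.val 0 0 * M.val 1 1 - M.val 0 1 * M.val 1 0 = 1 := by
    have := M.prop; rwa [Matrix.det_fin_two] at this
  rw [e, inv_val M]
  rw [show M.val = !![M.val 0 0, M.val 0 1; M.val 1 0, M.val 1 1] from Matrix.eta_fin_two M.val]
  simpa using key_trace_s9 _ _ _ _ s t hd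

lemma trace_conj' (s t : ℝ) (h : SL2R) :
    (!![1,0;s,1] * (h.val * !![1,0;t,1] * (h⁻¹).val)).trace = 2 - s*t*(h.val 0 1)^2 := by
  have := trace_conj s t 1 h
  simpa using this

theorem trace_range_C2_mul_C2 :
    {t : ℝ | ∃ A ∈ C2pp, ∃ B ∈ C2pp, t = (A * B).val.trace} = Set.Iic 2 ∧
    {t : ℝ | ∃ A ∈ C2pm, ∃ B ∈ C2pm, t = (A * B).val.trace} = Set.Iic 2 ∧
    {t : ℝ | ∃ A ∈ C2pp, ∃ B ∈ C2pm, t = (A * B).val.trace} = Set.Ici 2 := by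
  have hTpp : Matrix.det !![(1:ℝ),0;1,1] = 1 := by norm_num [Matrix.det_fin_two_of]
  have hTpm : Matrix.det !![(1:ℝ),0;-1,1] = 1 := by norm_num [Matrix.det_fin_two_of]
  refine ⟨?_, ?_, ?_⟩
  · ext t
    simp only [Set.mem_setOf_eq, Set.mem_Iic]
    constructor
    · rintro ⟨A, ⟨g, hg⟩, B, ⟨h, hh⟩, rfl⟩
      rw [Matrix.SpecialLinearGroup.coe_mul, hg, hh, trace_conj 1 1 g h]
      nlinarith [sq_nonneg (((g⁻¹*h).val) 0 1)]
    · intro ht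
      set b := Real.sqrt (2 - t) with hb
      have hb2 : b^2 = 2 - t := Real.sq_sqrt (by linarith)
      have hhdet : Matrix.det !![(1:ℝ),b;0,1] = 1 := by norm_num [Matrix.det_fin_two_of]
      set h : SL2R := ⟨!![1,b;0,1], hhdet⟩ with hhdef
      refine ⟨⟨_, hTpp⟩, ⟨1, by simp⟩, h * ⟨_, hTpp⟩ * h⁻¹,
        ⟨h, by erw [Matrix.SpecialLinearGroup.coe_mul, Matrix.SpecialLinearGroup.coe_mul]⟩, ?_⟩
      erw [Matrix.SpecialLinearGroup.coe_mul, Matrix.SpecialLinearGroup.coe_mul,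
        Matrix.SpecialLinearGroup.coe_mul]
      rw [show ((⟨_, hTpp⟩ : SL2R) : Matrix (Fin 2) (Fin 2) ℝ) * (h.val * !![1,0;1,1] * (h⁻¹).val)
          = !![1,0;1,1] * (h.val * !![1,0;1,1] * (h⁻¹).val) by rw [mul_assoc]]
      rw [trace_conj' 1 1 h]
      simp [hhdef]
      linarith [hb2]
  · ext t
    simp only [Set.mem_setOf_eq, Set.mem_Iic]
    constructor
    · rintro ⟨A, ⟨g, hg⟩, B, ⟨h, hh⟩, rfl⟩
      rw [Matrix.SpecialLinearGroup.coe_mul, hg, hh, trace_conj (-1) (-1) g h]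
      nlinarith [sq_nonneg (((g⁻¹*h).val) 0 1)]
    · intro ht
      set b := Real.sqrt (2 - t) with hb
      have hb2 : b^2 = 2 - t := Real.sq_sqrt (by linarith)
      have hhdet : Matrix.det !![(1:ℝ),b;0,1] = 1 := by norm_num [Matrix.det_fin_two_of]
      set h : SL2R := ⟨!![1,b;0,1], hhdet⟩ with hhdef
      refine ⟨⟨_, hTpm⟩, ⟨1, by simp⟩, h * ⟨_, hTpm⟩ * h⁻¹,
        ⟨h, by erw [Matrix.SpecialLinearGroup.coe_mul, Matrix.SpecialLinearGroup.coe_mul]⟩, ?_⟩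
      erw [Matrix.SpecialLinearGroup.coe_mul, Matrix.SpecialLinearGroup.coe_mul,
        Matrix.SpecialLinearGroup.coe_mul]
      rw [show ((⟨_, hTpm⟩ : SL2R) : Matrix (Fin 2) (Fin 2) ℝ) * (h.val * !![1,0;-1,1] * (h⁻¹).val)
          = !![1,0;-1,1] * (h.val * !![1,0;-1,1] * (h⁻¹).val) by rw [mul_assoc]]
      rw [trace_conj' (-1) (-1) h]
      simp [hhdef]
      linarith [hb2]
  · ext t
    simp only [Set.mem_setOf_eq, Set.mem_Ici]
    constructor
    · rintro ⟨A, ⟨g, hg⟩, B, ⟨h, hh⟩, rfl⟩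
      rw [Matrix.SpecialLinearGroup.coe_mul, hg, hh, trace_conj 1 (-1) g h]
      nlinarith [sq_nonneg (((g⁻¹*h).val) 0 1)]
    · intro ht
      set b := Real.sqrt (t - 2) with hb
      have hb2 : b^2 = t - 2 := Real.sq_sqrt (by linarith)
      have hhdet : Matrix.det !![(1:ℝ),b;0,1] = 1 := by norm_num [Matrix.det_fin_two_of]
      set h : SL2R := ⟨!![1,b;0,1], hhdet⟩ with hhdef
      refine ⟨⟨_, hTpp⟩, ⟨1, by simp⟩, h * ⟨_, hTpm⟩ * h⁻¹,
        ⟨h, by erw [Matrix.SpecialLinearGroup.coe_mul, Matrix.SpecialLinearGroup.coe_mul]⟩, ?_⟩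
      erw [Matrix.SpecialLinearGroup.coe_mul, Matrix.SpecialLinearGroup.coe_mul,
        Matrix.SpecialLinearGroup.coe_mul]
      rw [show ((⟨_, hTpp⟩ : SL2R) : Matrix (Fin 2) (Fin 2) ℝ) * (h.val * !![1,0;-1,1] * (h⁻¹).val)
          = !![1,0;1,1] * (h.val * !![1,0;-1,1] * (h⁻¹).val) by rw [mul_assoc]]
      rw [trace_conj' 1 (-1) h]
      simp [hhdef]
      linarith [hb2]
end

section
/- Let A ∈ SL₂(ℝ) with |tr A| > 2. Then for any real numbers t₁, t₂ there exist B, C ∈ SL₂(ℝ) with tr B = t₁, tr C = t₂, and AB = C. -/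
open Matrix

lemma solve_system (p q r s t₁ t₂ : ℝ) (hdet : p * s - q * r = 1)
    (h4 : 4 < (p + s) ^ 2) :
    ∃ a b c d : ℝ, a * d - b * c = 1 ∧ a + d = t₁ ∧
      p * a + q * c + r * b + s * d = t₂ := by
  rcases eq_or_ne r 0 with hr | hr
  · -- r = 0 case: p ≠ s
    have hps : p ≠ s := by
      intro h
      subst h
      rw [hr] at hdet
      nlinarith
    set a := (t₂ - s * t₁ - q) / (p - s) with ha
    refine ⟨a, a * (t₁ - a) - 1, 1, t₁ - a, by ring, by ring, ?_⟩
    rw [hr]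
    have hps' : p - s ≠ 0 := sub_ne_zero.mpr hps
    rw [ha]; field_simp
    ring
  · -- r ≠ 0 case
    set δ := p - s with hδ
    set e := t₂ - s * t₁ with he
    set K := (p + s) ^ 2 - 4 with hK
    have hK0 : 0 < K := by rw [hK]; linarith
    have hKδ : δ ^ 2 + 4 * q * r = K := by
      rw [hδ, hK]; linear_combination (-4) * hdet
    set c := (|2 * r * (t₁ * δ - 2 * e)| + |r ^ 2 * (t₁ ^ 2 - 4)|) / K + 1 with hc
    have hc1 : 1 ≤ c := by
      rw [hc]
      have : 0 ≤ (|2 * r * (t₁ * δ - 2 * e)| + |r ^ 2 * (t₁ ^ 2 - 4)|) / K :=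
        div_nonneg (by positivity) hK0.le
      linarith
    have hcK : |2 * r * (t₁ * δ - 2 * e)| + |r ^ 2 * (t₁ ^ 2 - 4)| ≤ K * c := by
      rw [hc, mul_add, mul_one, mul_div_cancel₀ _ hK0.ne']
      linarith
    set D := K * c ^ 2 + 2 * r * (t₁ * δ - 2 * e) * c + r ^ 2 * (t₁ ^ 2 - 4) with hD
    have hD0 : 0 ≤ D := by
      rw [hD]
      nlinarith [neg_abs_le (2 * r * (t₁ * δ - 2 * e)),
        neg_abs_le (r ^ 2 * (t₁ ^ 2 - 4)),
        abs_nonneg (2 * r * (t₁ * δ - 2 * e)),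
        abs_nonneg (r ^ 2 * (t₁ ^ 2 - 4)),
        mul_le_mul_of_nonneg_right hcK (le_trans zero_le_one hc1)]
    set S := Real.sqrt D with hS
    have hS2 : S ^ 2 = D := Real.sq_sqrt hD0
    set β := r * t₁ + δ * c with hβ
    set a := (β + S) / (2 * r) with ha
    set b := (e - δ * a - q * c) / r with hb
    have h2ra : 2 * r * a = β + S := by
      rw [ha]; field_simp
    have hrb : r * b = e - δ * a - q * c := by
      rw [hb]; field_simp
    refine ⟨a, b, c, t₁ - a, ?_, by ring, ?_⟩
    · -- determinant condition
      have key : 4 * r * (r * (a * (t₁ - a)) - (e - δ * a - q * c) * c - r) = 0 := by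
        have expand : 4 * r * (r * (a * (t₁ - a)) - (e - δ * a - q * c) * c - r)
            = (2 * r * a) * (2 * r * t₁ + 2 * δ * c) - (2 * r * a) ^ 2
              - 4 * r * e * c + 4 * r * q * c ^ 2 - 4 * r ^ 2 := by ring
        have sqdiff : (β + S) * (2 * r * t₁ + 2 * δ * c) - (β + S) ^ 2
            = β ^ 2 - S ^ 2 := by rw [hβ]; ring
        rw [expand, h2ra, sqdiff, hS2]
        linear_combination (β + r * t₁ + δ * c) * hβ - hD + c ^ 2 * hKδ
      have key2 : r * (a * (t₁ - a)) - (e - δ * a - q * c) * c - r = 0 := by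
        rcases mul_eq_zero.mp key with h | h
        · exact absurd h (by positivity)
        · exact h
      have hmain : r * (a * (t₁ - a) - b * c - 1) = 0 := by
        linear_combination key2 - c * hrb
      rcases mul_eq_zero.mp hmain with h | h
      · exact absurd h hr
      · linarith
    · linear_combination hrb + he - a * hδ

theorem exists_factor_with_traces (A : SL2R) (hA : 2 < |A.val.trace|)
    (t₁ t₂ : ℝ) :
    ∃ B C : SL2R, B.val.trace = t₁ ∧ C.val.trace = t₂ ∧ A * B = C := by
  have hAval : A.val = !![A.val 0 0, A.val 0 1; A.val 1 0, A.val 1 1] := by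
    ext i j; fin_cases i <;> fin_cases j <;> rfl
  have hdet : A.val 0 0 * A.val 1 1 - A.val 0 1 * A.val 1 0 = 1 := by
    have := A.2
    rwa [Matrix.det_fin_two] at this
  have htr : A.val.trace = A.val 0 0 + A.val 1 1 := Matrix.trace_fin_two _
  rw [htr] at hA
  have h4 : 4 < (A.val 0 0 + A.val 1 1) ^ 2 := by
    nlinarith [sq_abs (A.val 0 0 + A.val 1 1), abs_nonneg (A.val 0 0 + A.val 1 1)]
  obtain ⟨a, b, c, d, h1, h2, h3⟩ :=
    solve_system (A.val 0 0) (A.val 0 1) (A.val 1 0) (A.val 1 1) t₁ t₂ hdet h4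
  have hBdet : Matrix.det !![a, b; c, d] = 1 := by
    rw [Matrix.det_fin_two_of]; linarith
  set B : SL2R := ⟨!![a, b; c, d], hBdet⟩ with hB
  refine ⟨B, A * B, ?_, ?_, rfl⟩
  · rw [hB]; simp [Matrix.trace_fin_two_of]; linarith
  · show Matrix.trace ((A * B).val) = t₂
    rw [Matrix.SpecialLinearGroup.coe_mul, hB]
    conv_lhs => rw [hAval]
    rw [show (!![A.val 0 0, A.val 0 1; A.val 1 0, A.val 1 1] * !![a, b; c, d])
        = !![A.val 0 0 * a + A.val 0 1 * c, A.val 0 0 * b + A.val 0 1 * d;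
             A.val 1 0 * a + A.val 1 1 * c, A.val 1 0 * b + A.val 1 1 * d] from by
      rw [Matrix.mul_fin_two], Matrix.trace_fin_two_of]
    linarith
end

section
/- In SL₂(ℝ), the triple product of conjugacy classes C₂^{++} · C₂^{++} · C₂^{++} equals SL₂(ℝ) \ {I}: every matrix except the identity is a product of three matrices each conjugate to [[1,0],[1,1]], and I is not. -/
open Matrix

namespace Tpc

def mk2 (a b c d : ℝ) (h : a * d - b * c = 1) : SL2R :=
  ⟨!![a, b; c, d], by rw [Matrix.det_fin_two_of]; linarith⟩

@[simp] lemma mk2_val (a b c d : ℝ) (h) : (mk2 a b c d h).val = !![a, b; c, d] := rfl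

def Pm (q s : ℝ) : SL2R := mk2 (1 + q*s) (-q^2) (s^2) (1 - q*s) (by ring)

lemma Pm_val (q s : ℝ) : (Pm q s).val = !![1 + q*s, -q^2; s^2, 1 - q*s] := rfl

def Um (r : ℝ) : SL2R := mk2 1 r 0 1 (by ring)
def Lm (t : ℝ) : SL2R := mk2 1 0 t 1 (by ring)

lemma val_eq {A B : SL2R} (h : A.val = B.val) : A = B := Subtype.ext h

lemma mul_val (A B : SL2R) : (A * B).val = A.val * B.val := rfl

lemma one_val : (1 : SL2R).val = !![1, 0; 0, 1] := by
  rw [Matrix.SpecialLinearGroup.coe_one, Matrix.one_fin_two]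

lemma inv_val (A : SL2R) : (A⁻¹).val = !![A.val 1 1, -A.val 0 1; -A.val 1 0, A.val 0 0] := by
  rw [Matrix.SpecialLinearGroup.SL2_inv_expl A]
  ext i j
  fin_cases i <;> fin_cases j <;> rfl

lemma det_entries (A : SL2R) : A.val 0 0 * A.val 1 1 - A.val 0 1 * A.val 1 0 = 1 := by
  have h := A.property
  rw [Matrix.det_fin_two] at h
  exact h

lemma ne_one_of_21 {X : SL2R} (h : X.val 1 0 ≠ 0) : X ≠ 1 := by
  intro he; rw [he, one_val] at h; simp at h

lemma ne_one_of_12 {X : SL2R} (h : X.val 0 1 ≠ 0) : X ≠ 1 := by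
  intro he; rw [he, one_val] at h; simp at h

/-- the conjugate g M g⁻¹ depends only on the second column of g -/
lemma conj_form (g : SL2R) :
    g.val * !![1, 0; 1, 1] * (g⁻¹).val
      = !![1 + g.val 0 1 * g.val 1 1, -(g.val 0 1)^2; (g.val 1 1)^2, 1 - g.val 0 1 * g.val 1 1] := by
  have hd := det_entries g
  rw [inv_val]
  nth_rewrite 1 [Matrix.eta_fin_two g.val]
  rw [Matrix.mul_fin_two, Matrix.mul_fin_two]
  ext i j
  fin_cases i <;> fin_cases j <;> simp <;> linarith [hd]

/-- every element of C2pp has the P-form -/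
lemma mem_form {A : SL2R} (h : A ∈ C2pp) :
    ∃ q s : ℝ, (q ≠ 0 ∨ s ≠ 0) ∧ A.val = !![1 + q*s, -q^2; s^2, 1 - q*s] := by
  obtain ⟨g, hg⟩ := h
  refine ⟨g.val 0 1, g.val 1 1, ?_, by rw [hg, conj_form]⟩
  by_contra hc
  push_neg at hc
  have hd := det_entries g
  rw [hc.1, hc.2] at hd
  simp at hd

/-- conversely, every P-form with nonzero parameters is in C2pp -/
lemma Pm_mem (q s : ℝ) (h : q ≠ 0 ∨ s ≠ 0) : Pm q s ∈ C2pp := by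
  rcases eq_or_ne s 0 with hs | hs
  · have hq : q ≠ 0 := by tauto
    refine ⟨mk2 0 q (-q⁻¹) 0 (by field_simp; ring), ?_⟩
    rw [conj_form]
    simp [Pm_val, hs]
  · refine ⟨mk2 s⁻¹ q 0 s (by field_simp; ring), ?_⟩
    rw [conj_form]
    simp [Pm_val]

lemma eq_Pm_of_form {X : SL2R} {q s : ℝ} (h : X.val = !![1 + q*s, -q^2; s^2, 1 - q*s]) :
    X = Pm q s := val_eq (by rw [h, Pm_val])

/-- membership criterion -/
lemma crit {X : SL2R} (h2 : X.val 0 0 + X.val 1 1 = 2) (h12 : X.val 0 1 ≤ 0)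
    (h21 : 0 ≤ X.val 1 0) (hne : X ≠ 1) :
    ∃ q s : ℝ, (q ≠ 0 ∨ s ≠ 0) ∧ X.val = !![1 + q*s, -q^2; s^2, 1 - q*s] := by
  have hd := det_entries X
  set x := X.val 0 0 with hx
  set y := X.val 0 1 with hy
  set z := X.val 1 0 with hz
  set w := X.val 1 1 with hw
  rcases lt_or_eq_of_le h21 with hzpos | hz0
  · have hs2 : Real.sqrt z ^ 2 = z := Real.sq_sqrt (le_of_lt hzpos)
    have hsne : Real.sqrt z ≠ 0 := by positivity
    refine ⟨(x - 1)/Real.sqrt z, Real.sqrt z, Or.inr hsne, ?_⟩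
    have hqs : (x - 1)/Real.sqrt z * Real.sqrt z = x - 1 := by field_simp
    have hkey : (x - 1)^2 = -(y*z) := by linear_combination -hd + x*h2
    have hq2 : ((x - 1)/Real.sqrt z)^2 = -y := by
      rw [div_pow, hs2, div_eq_iff (ne_of_gt hzpos)]
      linear_combination hkey
    rw [Matrix.eta_fin_two X.val]
    rw [← hx, ← hy, ← hz, ← hw]
    rw [hqs, hq2, hs2]
    ext i j
    fin_cases i <;> fin_cases j <;> simp <;> linarith
  · have hx1 : x = 1 := by nlinarith [hd, h2]
    have hw1 : w = 1 := by linarith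
    have hyne : y ≠ 0 := by
      intro hy0
      apply hne
      apply val_eq
      rw [Matrix.eta_fin_two X.val, ← hx, ← hy, ← hz, ← hw, hx1, hw1, hy0, ← hz0, one_val]
    have hyneg : y < 0 := lt_of_le_of_ne h12 hyne
    have hq2 : Real.sqrt (-y) ^ 2 = -y := Real.sq_sqrt (by linarith)
    refine ⟨Real.sqrt (-y), 0, Or.inl (ne_of_gt (Real.sqrt_pos.mpr (by linarith))), ?_⟩
    rw [Matrix.eta_fin_two X.val, ← hx, ← hy, ← hz, ← hw, hx1, hw1, ← hz0, hq2]
    norm_num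

lemma mem_of_crit {X : SL2R} (h2 : X.val 0 0 + X.val 1 1 = 2) (h12 : X.val 0 1 ≤ 0)
    (h21 : 0 ≤ X.val 1 0) (hne : X ≠ 1) : X ∈ C2pp := by
  obtain ⟨q, s, hqs, hform⟩ := crit h2 h12 h21 hne
  rw [eq_Pm_of_form hform]
  exact Pm_mem q s hqs

lemma Um_mem {r : ℝ} (h : r < 0) : Um r ∈ C2pp := by
  have h2 : Real.sqrt (-r) ^ 2 = -r := Real.sq_sqrt (by linarith)
  have : Um r = Pm (Real.sqrt (-r)) 0 := by
    apply val_eq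
    rw [Pm_val, h2]
    norm_num [Um]
  rw [this]
  exact Pm_mem _ _ (Or.inl (ne_of_gt (Real.sqrt_pos.mpr (by linarith))))

lemma Lm_mem {t : ℝ} (h : 0 < t) : Lm t ∈ C2pp := by
  have h2 : Real.sqrt t ^ 2 = t := Real.sq_sqrt (by linarith)
  have : Lm t = Pm 0 (Real.sqrt t) := by
    apply val_eq
    rw [Pm_val, h2]
    norm_num [Lm]
  rw [this]
  exact Pm_mem _ _ (Or.inr (ne_of_gt (Real.sqrt_pos.mpr h)))

lemma Um_add (a b : ℝ) : Um a * Um b = Um (a + b) := by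
  apply val_eq
  rw [mul_val]
  show (!![1,a;0,1] : Matrix (Fin 2) (Fin 2) ℝ) * !![1,b;0,1] = !![1,a+b;0,1]
  rw [Matrix.mul_fin_two]
  norm_num [add_comm]

lemma Lm_add (a b : ℝ) : Lm a * Lm b = Lm (a + b) := by
  apply val_eq
  rw [mul_val]
  show (!![1,0;a,1] : Matrix (Fin 2) (Fin 2) ℝ) * !![1,0;b,1] = !![1,0;a+b,1]
  rw [Matrix.mul_fin_two]
  norm_num [add_comm]

lemma Um_zero : Um 0 = 1 := by
  apply val_eq
  rw [one_val]
  rfl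

lemma Um_inv (r : ℝ) : (Um r)⁻¹ = Um (-r) := by
  symm
  apply eq_inv_of_mul_eq_one_right
  rw [Um_add]
  simpa using Um_zero

lemma conj_mem (g : SL2R) {A : SL2R} (h : A ∈ C2pp) : g * A * g⁻¹ ∈ C2pp := by
  obtain ⟨k, hk⟩ := h
  refine ⟨g * k, ?_⟩
  rw [_root_.mul_inv_rev]
  show (g * A * g⁻¹).val = (g*k).val * _ * (k⁻¹ * g⁻¹).val
  rw [mul_val, mul_val, mul_val, mul_val, hk]
  simp only [mul_assoc]

/-- cube decomposition of a class element -/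
lemma cube {X : SL2R} (h : X ∈ C2pp) : ∃ A ∈ C2pp, ∃ B ∈ C2pp, ∃ C ∈ C2pp, X = A * B * C := by
  obtain ⟨g, hg⟩ := h
  have hM : X = g * (mk2 1 0 1 1 (by ring)) * g⁻¹ := by
    apply val_eq
    rw [mul_val, mul_val, hg]; rfl
  have hL3 : (mk2 1 0 1 1 (by ring) : SL2R)
      = mk2 1 0 (1/3) 1 (by ring) * mk2 1 0 (1/3) 1 (by ring) * mk2 1 0 (1/3) 1 (by ring) := by
    apply val_eq
    rw [mul_val, mul_val]
    show (!![1,0;1,1] : Matrix (Fin 2) (Fin 2) ℝ) = !![1,0;1/3,1] * !![1,0;1/3,1] * !![1,0;1/3,1]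
    rw [Matrix.mul_fin_two, Matrix.mul_fin_two]
    norm_num
  have hmem : (mk2 1 0 (1/3) 1 (by ring) : SL2R) ∈ C2pp := by
    have : (mk2 1 0 (1/3) 1 (by ring) : SL2R) = Lm (1/3) := rfl
    rw [this]; exact Lm_mem (by norm_num)
  refine ⟨g * mk2 1 0 (1/3) 1 (by ring) * g⁻¹, conj_mem g hmem,
         g * mk2 1 0 (1/3) 1 (by ring) * g⁻¹, conj_mem g hmem,
         g * mk2 1 0 (1/3) 1 (by ring) * g⁻¹, conj_mem g hmem, ?_⟩
  rw [hM, hL3]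
  group

/-- square lemma, U-type: trace < 2, lower-left > 0 -/
lemma sqU (Y : SL2R) (hz : 0 < Y.val 1 0) (ht : Y.val 0 0 + Y.val 1 1 < 2) :
    ∃ r : ℝ, r < 0 ∧ ∃ B ∈ C2pp, Y = Um r * B := by
  have hd := det_entries Y
  set x := Y.val 0 0
  set y := Y.val 0 1
  set z := Y.val 1 0
  set w := Y.val 1 1
  set r := (x + w - 2)/z with hr
  have hrneg : r < 0 := div_neg_of_neg_of_pos (by linarith) hz
  have hrz : r * z = x + w - 2 := div_mul_cancel₀ _ (ne_of_gt hz)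
  have h12 : y - r*w ≤ 0 := by
    have hkey : (y - r*w)*z = -(w-1)^2 := by linear_combination -hd - w*hrz
    nlinarith [sq_nonneg (w-1)]
  refine ⟨r, hrneg, mk2 (x - r*z) (y - r*w) z w (by linear_combination hd), ?_, ?_⟩
  · apply mem_of_crit
    · show (x - r*z) + w = 2
      linarith [hrz]
    · show y - r*w ≤ 0
      exact h12
    · show (0:ℝ) ≤ z
      linarith
    · exact ne_one_of_21 (show z ≠ 0 from ne_of_gt hz)
  · apply val_eq
    rw [mul_val]
    show Y.val = (!![1,r;0,1] : Matrix (Fin 2) (Fin 2) ℝ) * !![x - r*z, y - r*w; z, w]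
    rw [Matrix.mul_fin_two, Matrix.eta_fin_two Y.val]
    ext i j
    fin_cases i <;> fin_cases j <;> simp <;> ring

/-- square lemma, L-type: trace < 2, upper-right < 0 -/
lemma sqL (Y : SL2R) (hy : Y.val 0 1 < 0) (ht : Y.val 0 0 + Y.val 1 1 < 2) :
    ∃ t : ℝ, 0 < t ∧ ∃ B ∈ C2pp, Y = Lm t * B := by
  have hd := det_entries Y
  set x := Y.val 0 0
  set y := Y.val 0 1
  set z := Y.val 1 0
  set w := Y.val 1 1
  set t := (x + w - 2)/y with htdef
  have htpos : 0 < t := div_pos_of_neg_of_neg (by linarith) hy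
  have hty : t * y = x + w - 2 := div_mul_cancel₀ _ (ne_of_lt hy)
  have h21 : 0 ≤ z - t*x := by
    have hkey : (z - t*x)*y = -(x-1)^2 := by linear_combination -hd - x*hty
    nlinarith [sq_nonneg (x-1)]
  refine ⟨t, htpos, mk2 x y (z - t*x) (w - t*y) (by linear_combination hd), ?_, ?_⟩
  · apply mem_of_crit
    · show x + (w - t*y) = 2
      linarith [hty]
    · show y ≤ 0
      linarith
    · exact h21
    · exact ne_one_of_12 (show y ≠ 0 from ne_of_lt hy)
  · apply val_eq
    rw [mul_val]
    show Y.val = (!![1,0;t,1] : Matrix (Fin 2) (Fin 2) ℝ) * !![x, y; z - t*x, w - t*y]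
    rw [Matrix.mul_fin_two, Matrix.eta_fin_two Y.val]
    ext i j
    fin_cases i <;> fin_cases j <;> simp <;> ring

/-- main construction when upper-right entry is positive -/
lemma mainY (X : SL2R) (hy : 0 < X.val 0 1) :
    ∃ A ∈ C2pp, ∃ B ∈ C2pp, ∃ C ∈ C2pp, X = A * B * C := by
  have hd := det_entries X
  set x := X.val 0 0
  set y := X.val 0 1
  set z := X.val 1 0
  set w := X.val 1 1
  set E := |x| + |x - w| + |z*y| + |(x+w-2)*y| with hE
  have hE0 : 0 ≤ E := by positivity
  set u := x + y + 1 + E with hu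
  set K := u/y with hK
  have hKy : K * y = u := div_mul_cancel₀ _ (ne_of_gt hy)
  have hulb : 1 + |x - w| + |z*y| + |(x+w-2)*y| ≤ u := by
    have : (0:ℝ) ≤ x + |x| := by cases abs_cases x <;> linarith
    rw [hu, hE]; linarith
  have hu1 : (1:ℝ) ≤ u := by
    have := abs_nonneg (x - w); have := abs_nonneg (z*y); have := abs_nonneg ((x+w-2)*y)
    linarith
  have K1 : 0 < u^2 - u*(x-w) - z*y - (x+w-2)*y := by
    have t1 : 0 ≤ u * (u - |x-w| - 1 - |z*y| - |(x+w-2)*y|) :=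
      mul_nonneg (by linarith) (by linarith)
    have t2 : 0 ≤ (u - 1) * |z*y| := mul_nonneg (by linarith) (abs_nonneg _)
    have t3 : 0 ≤ (u - 1) * |(x+w-2)*y| := mul_nonneg (by linarith) (abs_nonneg _)
    have t4 : u * (x - w) ≤ u * |x - w| :=
      mul_le_mul_of_nonneg_left (le_abs_self _) (by linarith)
    have t5 : z*y ≤ |z*y| := le_abs_self _
    have t6 : (x+w-2)*y ≤ |(x+w-2)*y| := le_abs_self _
    nlinarith [t1, t2, t3, t4, t5, t6]
  have hdet2 : (x + x*K - y*K^2) * (z + w - w*K) - (x + y - y*K) * (z + z*K - w*K^2) = 1 := by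
    linear_combination hd
  set Y2 : SL2R := mk2 (x + x*K - y*K^2) (x + y - y*K) (z + z*K - w*K^2) (z + w - w*K) hdet2
    with hY2
  have e01 : Y2.val 0 1 = x + y - y*K := rfl
  have e00 : Y2.val 0 0 = x + x*K - y*K^2 := rfl
  have e11 : Y2.val 1 1 = z + w - w*K := rfl
  have hY01 : Y2.val 0 1 < 0 := by
    rw [e01]
    have : y * K = u := by rw [mul_comm]; exact hKy
    rw [this, hu]
    linarith
  have htr2 : Y2.val 0 0 + Y2.val 1 1 < 2 := by
    rw [e00, e11]
    have hmul : ((x + x*K - y*K^2) + (z + w - w*K) - 2) * y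
        = (x+w-2)*y + u*(x-w) + z*y - u^2 := by
      linear_combination (x - w - K*y - u) * hKy
    nlinarith [hmul, K1, hy]
  obtain ⟨t, htpos, B, hB, hYLB⟩ := sqL Y2 hY01 htr2
  have hC : Pm 1 (-K) ∈ C2pp := Pm_mem 1 (-K) (Or.inl one_ne_zero)
  have hXY2C : X = Y2 * Pm 1 (-K) := by
    apply val_eq
    rw [mul_val, hY2]
    show X.val = (!![x + x*K - y*K^2, x + y - y*K; z + z*K - w*K^2, z + w - w*K]
        : Matrix (Fin 2) (Fin 2) ℝ) * !![1 + 1*(-K), -1^2; (-K)^2, 1 - 1*(-K)]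
    rw [Matrix.mul_fin_two, Matrix.eta_fin_two X.val]
    ext i j
    fin_cases i <;> fin_cases j <;> simp <;> ring
  exact ⟨Lm t, Lm_mem htpos, B, hB, Pm 1 (-K), hC, by rw [hXY2C, hYLB]⟩

lemma conjU_01 (r : ℝ) (X : SL2R) :
    (Um r * X * (Um r)⁻¹).val 0 1
      = X.val 0 1 + r*(X.val 1 1 - X.val 0 0) - r^2 * X.val 1 0 := by
  rw [Um_inv, mul_val, mul_val]
  show ((!![1,r;0,1] : Matrix (Fin 2) (Fin 2) ℝ) * X.val * !![1,-r;0,1]) 0 1 = _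
  nth_rewrite 1 [Matrix.eta_fin_two X.val]
  rw [Matrix.mul_fin_two, Matrix.mul_fin_two]
  simp
  ring

lemma conj3 (g X A B C : SL2R) (h : X = A * B * C) :
    g * X * g⁻¹ = (g*A*g⁻¹) * (g*B*g⁻¹) * (g*C*g⁻¹) := by
  rw [h]; group

/-- the full backward construction -/
lemma main (X : SL2R) (hne : X ≠ 1) :
    ∃ A ∈ C2pp, ∃ B ∈ C2pp, ∃ C ∈ C2pp, X = A * B * C := by
  have hd := det_entries X
  set x := X.val 0 0 with hx
  set y := X.val 0 1 with hy
  set z := X.val 1 0 with hz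
  set w := X.val 1 1 with hw
  by_cases hy1 : 0 < y
  · exact mainY X hy1
  by_cases hz1 : z < 0
  · set r := max 1 ((1 + |y| + |w - x|)/(-z)) with hr
    have hr1 : (1:ℝ) ≤ r := le_max_left _ _
    have hr0 : (0:ℝ) < r := by linarith
    have hr2 : 1 + |y| + |w - x| ≤ r * (-z) := by
      have := le_max_right 1 ((1 + |y| + |w - x|)/(-z))
      rw [div_le_iff₀ (by linarith : (0:ℝ) < -z)] at this
      rw [← hr] at this
      linarith [this]
    have hpos : 0 < (Um r * X * (Um r)⁻¹).val 0 1 := by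
      rw [conjU_01, ← hx, ← hy, ← hz, ← hw]
      have t1 : r * (1 + |y| + |w - x|) ≤ r * (r * (-z)) :=
        mul_le_mul_of_nonneg_left hr2 (le_of_lt hr0)
      have t2 : r * (-(|w - x|)) ≤ r * (w - x) :=
        mul_le_mul_of_nonneg_left (neg_abs_le _) (le_of_lt hr0)
      have t3 : (0:ℝ) ≤ (r - 1) * |y| := mul_nonneg (by linarith) (abs_nonneg _)
      nlinarith [t1, t2, t3, neg_abs_le y]
    obtain ⟨A, hA, B, hB, C, hC, hXp⟩ := mainY _ hpos
    refine ⟨(Um r)⁻¹ * A * ((Um r)⁻¹)⁻¹, conj_mem _ hA,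
           (Um r)⁻¹ * B * ((Um r)⁻¹)⁻¹, conj_mem _ hB,
           (Um r)⁻¹ * C * ((Um r)⁻¹)⁻¹, conj_mem _ hC, ?_⟩
    rw [← conj3 _ _ _ _ _ hXp]
    group
  have hyle : y ≤ 0 := by linarith [not_lt.mp hy1]
  have hzge : 0 ≤ z := by linarith [not_lt.mp hz1]
  rcases lt_trichotomy (x + w) 2 with htr | htr | htr
  · by_cases hz2 : 0 < z
    · obtain ⟨s, hsneg, B, hB, hUB⟩ := sqU X hz2 htr
      refine ⟨Um (s/2), Um_mem (by linarith), Um (s/2), Um_mem (by linarith), B, hB, ?_⟩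
      rw [Um_add]
      norm_num
      exact hUB
    by_cases hy2 : y < 0
    · obtain ⟨t, htpos, B, hB, hLB⟩ := sqL X hy2 htr
      refine ⟨Lm (t/2), Lm_mem (by linarith), Lm (t/2), Lm_mem (by linarith), B, hB, ?_⟩
      rw [Lm_add]
      norm_num
      exact hLB
    have hy0 : y = 0 := le_antisymm hyle (not_lt.mp hy2)
    have hz0 : z = 0 := le_antisymm (not_lt.mp hz2) hzge
    have hxw : x * w = 1 := by rw [hy0, hz0] at hd; linarith
    have hxne : x ≠ 0 := by intro h0; rw [h0] at hxw; linarith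
    have hxneg : x < 0 := by
      rcases lt_or_gt_of_ne hxne with h | h
      · exact h
      · exfalso; nlinarith [sq_nonneg (x - 1)]
    have hdY : x * w - 0 * (-x) = 1 := by linarith
    set Y : SL2R := mk2 x 0 (-x) w hdY with hYdef
    have hY10 : 0 < Y.val 1 0 := by show 0 < -x; linarith
    have hYtr : Y.val 0 0 + Y.val 1 1 < 2 := by show x + w < 2; exact htr
    obtain ⟨s, hsneg, B, hB, hUB⟩ := sqU Y hY10 hYtr
    refine ⟨Lm 1, Lm_mem one_pos, Um s, Um_mem hsneg, B, hB, ?_⟩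
    have hXLY : X = Lm 1 * Y := by
      apply val_eq
      rw [mul_val, hYdef]
      show X.val = (!![1,0;1,1] : Matrix (Fin 2) (Fin 2) ℝ) * !![x, 0; -x, w]
      rw [Matrix.mul_fin_two, Matrix.eta_fin_two X.val, ← hx, ← hy, ← hz, ← hw, hy0, hz0]
      norm_num
    rw [hXLY, hUB, ← mul_assoc]
  · exact cube (mem_of_crit (by rw [← hx, ← hw]; exact htr) (by rw [← hy]; exact hyle)
      (by rw [← hz]; exact hzge) hne)
  · by_cases hz2 : 0 < z
    · set r := (w - x)/(2*z) with hr
      have hpos : 0 < (Um r * X * (Um r)⁻¹).val 0 1 := by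
        rw [conjU_01, ← hx, ← hy, ← hz, ← hw]
        have hkey : (y + r*(w - x) - r^2*z) * (4*z) = 4*y*z + (w-x)^2 := by
          rw [hr]; field_simp; ring
        have h4 : 4*y*z + (w-x)^2 = (x+w)^2 - 4 := by linear_combination -4*hd
        nlinarith [hkey, h4, hz2, htr]
      obtain ⟨A, hA, B, hB, C, hC, hXp⟩ := mainY _ hpos
      refine ⟨(Um r)⁻¹ * A * ((Um r)⁻¹)⁻¹, conj_mem _ hA,
             (Um r)⁻¹ * B * ((Um r)⁻¹)⁻¹, conj_mem _ hB,
             (Um r)⁻¹ * C * ((Um r)⁻¹)⁻¹, conj_mem _ hC, ?_⟩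
      rw [← conj3 _ _ _ _ _ hXp]
      group
    · have hz0 : z = 0 := le_antisymm (not_lt.mp hz2) hzge
      have hxw : x * w = 1 := by rw [hz0] at hd; linarith
      have hwx : w - x ≠ 0 := by
        intro h0
        have : w = x := by linarith
        rw [this] at hxw htr
        nlinarith
      set r := (1 - y)/(w - x) with hr
      have hpos : 0 < (Um r * X * (Um r)⁻¹).val 0 1 := by
        rw [conjU_01, ← hx, ← hy, ← hz, ← hw, hz0, hr]
        rw [div_mul_cancel₀ _ hwx]
        linarith
      obtain ⟨A, hA, B, hB, C, hC, hXp⟩ := mainY _ hpos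
      refine ⟨(Um r)⁻¹ * A * ((Um r)⁻¹)⁻¹, conj_mem _ hA,
             (Um r)⁻¹ * B * ((Um r)⁻¹)⁻¹, conj_mem _ hB,
             (Um r)⁻¹ * C * ((Um r)⁻¹)⁻¹, conj_mem _ hC, ?_⟩
      rw [← conj3 _ _ _ _ _ hXp]
      group

lemma inv_form {A : SL2R} {q s : ℝ} (h : A.val = !![1 + q*s, -q^2; s^2, 1 - q*s]) :
    (A⁻¹).val = !![1 - q*s, q^2; -s^2, 1 + q*s] := by
  rw [inv_val, h]
  norm_num

/-- the identity is not a product of three elements of the class -/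
lemma not_one {A B C : SL2R} (hA : A ∈ C2pp) (hB : B ∈ C2pp) (hC : C ∈ C2pp) :
    A * B * C ≠ 1 := by
  intro h
  obtain ⟨qa, sa, hqa, ha⟩ := mem_form hA
  obtain ⟨qb, sb, hqb, hb⟩ := mem_form hB
  obtain ⟨qc, sc, hqc, hc⟩ := mem_form hC
  have hB' : B = A⁻¹ * C⁻¹ := by
    have h2 : A⁻¹ * (A * B * C) * C⁻¹ = A⁻¹ * 1 * C⁻¹ := by rw [h]
    simpa [mul_assoc] using h2
  have hmat : (!![1 + qb*sb, -qb^2; sb^2, 1 - qb*sb] : Matrix (Fin 2) (Fin 2) ℝ)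
      = !![1 - qa*sa, qa^2; -sa^2, 1 + qa*sa] * !![1 - qc*sc, qc^2; -sc^2, 1 + qc*sc] := by
    rw [← hb, ← inv_form ha, ← inv_form hc, ← mul_val, ← hB']
  rw [Matrix.mul_fin_two] at hmat
  have e00 := congrFun (congrFun hmat 0) 0
  have e01 := congrFun (congrFun hmat 0) 1
  have e10 := congrFun (congrFun hmat 1) 0
  have e11 := congrFun (congrFun hmat 1) 1
  simp only [Matrix.cons_val', Matrix.cons_val_zero, Matrix.cons_val_one, Matrix.head_cons,
    Matrix.empty_val', Matrix.cons_val_fin_one, Matrix.head_fin_const, Matrix.of_apply]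
    at e00 e01 e10 e11
  have h1 : (qa*sc - sa*qc)^2 = 0 := by linear_combination e00 + e11
  have heq : qa*sc - sa*qc = 0 := by
    have := sq_eq_zero_iff.mp h1
    linarith [this]
  have h2 : qa^2 + sa^2 + qc^2 + sc^2 + qb^2 + sb^2 = 0 := by
    linear_combination -e01 + e10 - (qa*qc + sa*sc)*heq
  have hpos : 0 < qa^2 + sa^2 := by
    rcases hqa with h' | h'
    · have : 0 < qa^2 := by positivity
      nlinarith [sq_nonneg sa]
    · have : 0 < sa^2 := by positivity
      nlinarith [sq_nonneg qa]
  nlinarith [sq_nonneg qb, sq_nonneg sb, sq_nonneg qc, sq_nonneg sc]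

end Tpc

theorem triple_product_C2pp :
    {X : SL2R | ∃ A ∈ C2pp, ∃ B ∈ C2pp, ∃ C ∈ C2pp, X = A * B * C} = {1}ᶜ := by
  ext X
  simp only [Set.mem_setOf_eq, Set.mem_compl_iff, Set.mem_singleton_iff]
  constructor
  · rintro ⟨A, hA, B, hB, C, hC, rfl⟩
    exact Tpc.not_one hA hB hC
  · intro h
    exact Tpc.main X h
end

section
/- In PSL₂(ℝ), the product of any four non-trivial conjugacy classes is the whole group PSL₂(ℝ); consequently the covering number and extended covering number of PSL₂(ℝ) both equal 4. -/
open Matrix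

/-- PSL₂(ℝ) = SL₂(ℝ)/{±I} (the center of SL₂(ℝ) is {±I}). -/
abbrev PSL2R := Matrix.SpecialLinearGroup (Fin 2) ℝ ⧸
  Subgroup.center (Matrix.SpecialLinearGroup (Fin 2) ℝ)

/-- "C^n = G for every non-trivial conjugacy class C". -/
def CoverProp (G : Type*) [Group G] (n : ℕ) : Prop :=
  ∀ g : G, g ≠ 1 → ∀ x : G,
    ∃ f : Fin n → G, (∀ i, IsConj g (f i)) ∧ (List.ofFn f).prod = x

/-- "the product of any n non-trivial conjugacy classes is G". -/
def ExtCoverProp (G : Type*) [Group G] (n : ℕ) : Prop :=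
  ∀ g : Fin n → G, (∀ i, g i ≠ 1) → ∀ x : G,
    ∃ f : Fin n → G, (∀ i, IsConj (g i) (f i)) ∧ (List.ofFn f).prod = x

namespace PSLCover

abbrev SL2 := Matrix.SpecialLinearGroup (Fin 2) ℝ

def mk2 (a b c d : ℝ) (h : a*d - b*c = 1) : SL2 :=
  ⟨!![a,b;c,d], by rw [Matrix.det_fin_two_of]; exact h⟩

/-- negation on SL2 -/
def nSL (A : SL2) : SL2 := ⟨-A.1, by rw [Matrix.det_neg]; simp [A.2]⟩

lemma nSL_mul_left (U V : SL2) : nSL U * V = nSL (U * V) := by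
  apply Subtype.ext
  simp [nSL, Matrix.SpecialLinearGroup.coe_mul]
  show (-U.1) * V.1 = -(U.1 * V.1); exact neg_mul _ _

lemma nSL_mul_right (U V : SL2) : U * nSL V = nSL (U * V) := by
  apply Subtype.ext
  simp [nSL, Matrix.SpecialLinearGroup.coe_mul]
  show U.1 * (-V.1) = -(U.1 * V.1); exact mul_neg _ _

lemma nSL_nSL (U : SL2) : nSL (nSL U) = U := by
  apply Subtype.ext
  simp [nSL]

lemma nSL_conj (Q Y : SL2) : Q * nSL Y * Q⁻¹ = nSL (Q * Y * Q⁻¹) := by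
  rw [nSL_mul_right, nSL_mul_left]

lemma trace_nSL (Y : SL2) : Matrix.trace ((nSL Y).1) = - Matrix.trace (Y.1) := by
  simp [nSL]

lemma center_val (A : SL2) (h : A ∈ Subgroup.center SL2) : A.1 = 1 ∨ A.1 = -1 := by
  obtain ⟨r, hr, hrA⟩ := Matrix.SpecialLinearGroup.mem_center_iff.mp h
  simp only [Fintype.card_fin] at hr
  have hfac : (r - 1) * (r + 1) = 0 := by ring_nf; nlinarith [hr]
  rcases mul_eq_zero.mp hfac with h1 | h2
  · left; rw [← hrA]; have : r = 1 := by linarith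
    simp [this]
  · right; rw [← hrA]; have : r = -1 := by linarith
    simp [this, Matrix.scalar]
    ext i j
    simp [Matrix.diagonal, Matrix.one_apply]
    split <;> simp

lemma neg_one_center : (nSL 1 : SL2) ∈ Subgroup.center SL2 := by
  apply Matrix.SpecialLinearGroup.mem_center_iff.mpr
  refine ⟨-1, by norm_num, ?_⟩
  apply Matrix.ext; intro i j
  simp [nSL, Matrix.scalar, Matrix.diagonal, Matrix.one_apply]
  split <;> simp

/-! ### The lower bound : three conjugates of J cannot multiply to a central element -/

def jSL : SL2 := mk2 0 (-1) 1 0 (by ring)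

lemma jSL_not_center : jSL ∉ Subgroup.center SL2 := by
  intro h
  rcases center_val _ h with h1 | h1 <;>
  · have := congrFun (congrFun h1 0 : _) 1
    simp [jSL, mk2, Matrix.one_apply] at this

lemma trace_conj_j (C : SL2) :
    Matrix.trace ((C * jSL * C⁻¹ * jSL).1) ≤ -2 := by
  have hd := C.2
  rw [Matrix.det_fin_two] at hd
  have hC := Matrix.eta_fin_two C.1
  simp only [Matrix.SpecialLinearGroup.coe_mul, Matrix.SpecialLinearGroup.coe_inv]
  rw [hC, Matrix.adjugate_fin_two]
  rw [show (jSL : SL2).1 = !![0,-1;1,0] from rfl]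
  simp [Matrix.mul_fin_two, Matrix.trace_fin_two_of]
  nlinarith [sq_nonneg (C.1 0 0 - C.1 1 1), sq_nonneg (C.1 0 1 + C.1 1 0)]

lemma trace_inv (Z : SL2) : Matrix.trace ((Z⁻¹).1) = Matrix.trace (Z.1) := by
  rw [Matrix.SpecialLinearGroup.coe_inv, Matrix.eta_fin_two Z.1, Matrix.adjugate_fin_two]
  simp [Matrix.trace_fin_two_of]
  ring

lemma coe_inv_mul (P : SL2) : (P⁻¹).1 * P.1 = 1 := by
  rw [← Matrix.SpecialLinearGroup.coe_mul, inv_mul_cancel]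
  simp

lemma trace_conj_mat (P : SL2) (M : Matrix (Fin 2) (Fin 2) ℝ) :
    Matrix.trace (P.1 * M * (P⁻¹).1) = Matrix.trace M := by
  rw [Matrix.trace_mul_comm, ← mul_assoc, coe_inv_mul, one_mul]

lemma three_j_not_central (M₁ M₂ M₃ W : SL2) (hW : W ∈ Subgroup.center SL2) :
    (M₁ * jSL * M₁⁻¹) * (M₂ * jSL * M₂⁻¹) * (M₃ * jSL * M₃⁻¹) ≠ W := by
  intro hEq
  have h1 : (M₁ * jSL * M₁⁻¹) * (M₂ * jSL * M₂⁻¹) = W * (M₃ * jSL * M₃⁻¹)⁻¹ := by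
    rw [← hEq]; group
  have hle : Matrix.trace (((M₁ * jSL * M₁⁻¹) * (M₂ * jSL * M₂⁻¹)).1) ≤ -2 := by
    have eS : (M₁ * jSL * M₁⁻¹) * (M₂ * jSL * M₂⁻¹)
        = M₂ * ((M₂⁻¹ * M₁) * jSL * (M₂⁻¹ * M₁)⁻¹ * jSL) * M₂⁻¹ := by group
    rw [eS]
    rw [show (M₂ * ((M₂⁻¹ * M₁) * jSL * (M₂⁻¹ * M₁)⁻¹ * jSL) * M₂⁻¹).1
        = M₂.1 * ((M₂⁻¹ * M₁) * jSL * (M₂⁻¹ * M₁)⁻¹ * jSL).1 * (M₂⁻¹).1 by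
          simp [Matrix.SpecialLinearGroup.coe_mul]]
    rw [trace_conj_mat]
    exact trace_conj_j _
  have e3 : (M₃ * jSL * M₃⁻¹)⁻¹ = M₃ * jSL⁻¹ * M₃⁻¹ := by group
  have etr : Matrix.trace ((M₃ * jSL⁻¹ * M₃⁻¹).1) = 0 := by
    rw [show (M₃ * jSL⁻¹ * M₃⁻¹).1 = M₃.1 * (jSL⁻¹).1 * (M₃⁻¹).1 by
          simp [Matrix.SpecialLinearGroup.coe_mul]]
    rw [trace_conj_mat]
    rw [Matrix.SpecialLinearGroup.coe_inv, show (jSL : SL2).1 = !![0,-1;1,0] from rfl,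
      Matrix.adjugate_fin_two]
    simp [Matrix.trace_fin_two_of]
  have hz : Matrix.trace ((W * (M₃ * jSL * M₃⁻¹)⁻¹).1) = 0 := by
    rw [e3, show (W * (M₃ * jSL⁻¹ * M₃⁻¹)).1 = W.1 * (M₃ * jSL⁻¹ * M₃⁻¹).1 from
      Matrix.SpecialLinearGroup.coe_mul _ _]
    rcases center_val W hW with hW1 | hW1
    · rw [hW1, one_mul, etr]
    · rw [hW1]
      simp only [Matrix.neg_mul, Matrix.trace_neg, neg_eq_zero, one_mul]
      exact etr
  rw [h1, hz] at hle
  norm_num at hle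


/-! ### Upper bound machinery -/

lemma quad_solve (α β γ : ℝ) (hα : α ≠ 0) :
    ∃ N σ : ℝ, (σ = 1 ∨ σ = -1) ∧ ∀ T, N ≤ T → ∃ m, α*m^2 + β*m + γ = σ * T := by
  refine ⟨|γ| + β^2/(4*|α|) + 1, if 0 < α then 1 else -1, by split <;> simp, ?_⟩
  intro T hT
  have habs : 0 < |α| := abs_pos.mpr hα
  have hσ : α * (if 0 < α then (1:ℝ) else -1) = |α| := by
    split
    · rw [abs_of_pos ‹_›]; ring
    · rw [abs_of_neg (lt_of_le_of_ne (not_lt.mp ‹_›) hα)]; ring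
  set σ : ℝ := if 0 < α then (1:ℝ) else -1 with hσdef
  set Δ : ℝ := β^2 - 4*α*(γ - σ*T) with hΔdef
  have hγ : α*γ ≤ (|α|) * (|γ|) := by rw [← abs_mul]; exact le_abs_self _
  have hΔ : 0 ≤ Δ := by
    have h4 : α*(σ*T) = (|α|)*T := by rw [show α*(σ*T) = (α*σ)*T by ring, hσ]
    have hfs : 4*(|α|)*(β^2/(4*(|α|))) = β^2 := by field_simp
    have hT' : 4*((|α|)*T) ≥ 4*(|α|)*((|γ|) + β^2/(4*(|α|)) + 1) := by nlinarith
    nlinarith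
  set m : ℝ := (-β + Real.sqrt Δ)/(2*α) with hm
  have h2 : (2*α*m + β)^2 = Δ := by
    have : 2*α*m + β = Real.sqrt Δ := by rw [hm]; field_simp; ring
    rw [this]; exact Real.sq_sqrt hΔ
  refine ⟨m, ?_⟩
  have key : 4*α*(α*m^2 + β*m + γ - σ*T) = 0 := by
    rw [hΔdef] at h2; linear_combination h2
  rcases mul_eq_zero.mp key with h | h
  · exact absurd h (by simpa using hα)
  · linarith

lemma trace_form (A B : SL2) (m : ℝ) :
    Matrix.trace ((A * (mk2 1 m 0 1 (by ring) * B * (mk2 1 m 0 1 (by ring))⁻¹)).1)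
      = (-(A.1 1 0 * B.1 1 0))*m^2
        + (A.1 0 0 * B.1 1 0 + A.1 1 0*(B.1 1 1 - B.1 0 0) - A.1 1 1 * B.1 1 0)*m
        + (A.1 0 0 * B.1 0 0 + A.1 0 1 * B.1 1 0 + A.1 1 0 * B.1 0 1 + A.1 1 1 * B.1 1 1) := by
  have hA := Matrix.eta_fin_two A.1
  have hB := Matrix.eta_fin_two B.1
  simp only [Matrix.SpecialLinearGroup.coe_mul, Matrix.SpecialLinearGroup.coe_inv]
  rw [show ((mk2 1 m 0 1 (by ring)) : SL2).1 = !![1,m;0,1] from rfl]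
  rw [Matrix.adjugate_fin_two]
  rw [hA, hB]
  simp [Matrix.mul_fin_two, Matrix.trace_fin_two_of]
  ring

lemma lowerLeft (A : SL2) (hA : A ∉ Subgroup.center SL2) :
    ∃ P : SL2, ((P * A * P⁻¹).1 1 0) ≠ 0 := by
  have hdet := A.2
  rw [Matrix.det_fin_two] at hdet
  by_cases hc : A.1 1 0 ≠ 0
  · exact ⟨1, by simpa using hc⟩
  push_neg at hc
  by_cases hb : A.1 0 1 ≠ 0
  · refine ⟨mk2 0 (-1) 1 0 (by ring), ?_⟩
    simp only [Matrix.SpecialLinearGroup.coe_mul, Matrix.SpecialLinearGroup.coe_inv]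
    rw [show ((mk2 0 (-1) 1 0 (by ring)) : SL2).1 = !![0,-1;1,0] from rfl]
    rw [Matrix.adjugate_fin_two, Matrix.eta_fin_two A.1]
    simp [Matrix.mul_fin_two]
    simpa using hb
  push_neg at hb
  -- diagonal; a ≠ d since not central
  have had : A.1 0 0 ≠ A.1 1 1 := by
    intro h
    apply hA
    apply Matrix.SpecialLinearGroup.mem_center_iff.mpr
    refine ⟨A.1 0 0, ?_, ?_⟩
    · simp only [Fintype.card_fin]
      rw [hc, hb, ← h] at hdet; nlinarith [hdet]
    · apply Matrix.ext; intro i j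
      fin_cases i <;> fin_cases j <;>
        simp [Matrix.scalar, Matrix.diagonal, Matrix.one_apply, hb, hc, h]
  refine ⟨mk2 1 0 1 1 (by ring), ?_⟩
  simp only [Matrix.SpecialLinearGroup.coe_mul, Matrix.SpecialLinearGroup.coe_inv]
  rw [show ((mk2 1 0 1 1 (by ring)) : SL2).1 = !![1,0;1,1] from rfl]
  rw [Matrix.adjugate_fin_two, Matrix.eta_fin_two A.1]
  simp [Matrix.mul_fin_two, hb, hc]
  intro h
  exact had (by linarith)

noncomputable def lam (τ : ℝ) : ℝ := (τ + Real.sqrt (τ^2 - 4))/2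

lemma lam_facts (τ : ℝ) (hτ : 2 < τ) : (lam τ)^2 - τ*(lam τ) + 1 = 0 ∧ 1 < lam τ := by
  have h4 : 0 ≤ τ^2 - 4 := by nlinarith
  have hs := Real.sq_sqrt h4
  have hsnn := Real.sqrt_nonneg (τ^2-4)
  constructor
  · unfold lam; field_simp; nlinarith [hs]
  · unfold lam; nlinarith [hsnn]

lemma conj_helper (Y Q : SL2) (D : Matrix (Fin 2) (Fin 2) ℝ) (h : Y.1 * Q.1 = Q.1 * D) :
    (Q⁻¹ * Y * Q).1 = D := by
  have h1 : (Q⁻¹ * Y * Q).1 = (Q⁻¹).1 * (Y.1 * Q.1) := by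
    rw [Matrix.SpecialLinearGroup.coe_mul, Matrix.SpecialLinearGroup.coe_mul, mul_assoc]
  rw [h1, h, ← mul_assoc]
  have h2 : (Q⁻¹).1 * Q.1 = 1 := by
    rw [← Matrix.SpecialLinearGroup.coe_mul, inv_mul_cancel]
    rfl
  rw [h2, one_mul]

lemma conj_diag (Y : SL2) (τ : ℝ) (htr : Matrix.trace Y.1 = τ) (hτ : 2 < τ) :
    ∃ Q : SL2, (Q⁻¹ * Y * Q).1 = !![lam τ, 0; 0, (lam τ)⁻¹] := by
  obtain ⟨hr1, hl1⟩ := lam_facts τ hτ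
  set l := lam τ with hldef
  have hl0 : (0:ℝ) < l := by linarith
  have hlne : l ≠ 0 := ne_of_gt hl0
  set μ := l⁻¹ with hμdef
  have hml : l * μ = 1 := mul_inv_cancel₀ hlne
  have hμ0 : (0:ℝ) < μ := by positivity
  have hμ1 : μ < 1 := (inv_lt_one₀ hl0).mpr hl1
  have hlμ : μ < l := by linarith
  have hμlne : μ - l ≠ 0 := sub_ne_zero.mpr (ne_of_lt hlμ)
  set a := Y.1 0 0 with ha
  set b := Y.1 0 1 with hb
  set c := Y.1 1 0 with hc
  set d := Y.1 1 1 with hd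
  have hdet : a*d - b*c = 1 := by
    have := Y.2
    rw [Matrix.det_fin_two] at this
    exact this
  have htr' : a + d = τ := by
    rw [Matrix.trace_fin_two] at htr
    exact htr
  have hr1' : l^2 - (a+d)*l + 1 = 0 := by rw [htr']; exact hr1
  have hr1mu : μ^2 - (a+d)*μ + 1 = 0 := by
    linear_combination μ^2 * hr1' + ((a+d)*μ - (l*μ+1)) * hml
  have hYeta : Y.1 = !![a, b; c, d] := Matrix.eta_fin_two Y.1
  by_cases hc0 : c ≠ 0
  · set x : ℝ := (c*(l-μ))⁻¹ with hx
    have hclμ : c*(l-μ) ≠ 0 := mul_ne_zero hc0 (sub_ne_zero.mpr (ne_of_gt hlμ))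
    have hxc : x*(c*(l-μ)) = 1 := inv_mul_cancel₀ hclμ
    refine ⟨mk2 (x*(l-d)) (μ-d) (x*c) c ?_, ?_⟩
    · linear_combination hxc
    · apply conj_helper
      rw [hYeta, show ((mk2 (x*(l-d)) (μ-d) (x*c) c _) : SL2).1 = !![x*(l-d), μ-d; x*c, c] from rfl]
      ext i j
      fin_cases i <;> fin_cases j <;>
        simp [Matrix.mul_fin_two]
      · linear_combination (-x) * hr1' + (-x) * hdet
      · linear_combination (-1 : ℝ) * hr1mu + (-1 : ℝ) * hdet
      · ring
      · ring
  · push_neg at hc0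
    rw [hc0] at hdet
    have had : a*d = 1 := by linarith [hdet]
    have hsum0 : l*(l + μ - (a+d)) = 0 := by linear_combination hr1' + hml
    have hsum : l + μ = a + d := by
      rcases mul_eq_zero.mp hsum0 with h | h
      · exact absurd h hlne
      · linarith
    have hfac : (a - l)*(a - μ) = 0 := by
      linear_combination (-a)*hsum + hml + (-1)*had
    rcases mul_eq_zero.mp hfac with hal | hamu
    · have hal' : a = l := by linarith [sub_eq_zero.mp hal]
      have hdμ0 : l*(d - μ) = 0 := by linear_combination had - hml - d*hal'
      have hd' : d = μ := by
        rcases mul_eq_zero.mp hdμ0 with h | h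
        · exact absurd h hlne
        · linarith
      set w : ℝ := b*(μ-l)⁻¹ with hwdef
      have hw1 : w*(μ-l) = b := by rw [hwdef]; exact inv_mul_cancel_right₀ hμlne b
      refine ⟨mk2 1 w 0 1 (by ring), ?_⟩
      apply conj_helper
      rw [hYeta, show ((mk2 1 w 0 1 (by ring)) : SL2).1 = !![1, w; 0, 1] from rfl]
      ext i j
      rw [hc0]
      fin_cases i <;> fin_cases j <;>
        simp [Matrix.mul_fin_two]
      · linear_combination hal'
      · linear_combination w*hal' - hw1
      · linear_combination hd'
    · have hamu' : a = μ := by linarith [sub_eq_zero.mp hamu]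
      have hdl0 : μ*(d - l) = 0 := by linear_combination had - hml - d*hamu'
      have hd' : d = l := by
        rcases mul_eq_zero.mp hdl0 with h | h
        · exact absurd h (ne_of_gt hμ0)
        · linarith
      have hi : (μ-l)⁻¹*(μ-l) = 1 := inv_mul_cancel₀ hμlne
      refine ⟨mk2 b ((μ-l)⁻¹) (l-μ) 0 ?_, ?_⟩
      · linear_combination hi
      · apply conj_helper
        rw [hYeta, show ((mk2 b ((μ-l)⁻¹) (l-μ) 0 _) : SL2).1 = !![b, (μ-l)⁻¹; l-μ, 0] from rfl]
        ext i j
        rw [hc0]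
        fin_cases i <;> fin_cases j <;>
          simp [Matrix.mul_fin_two]
        · linear_combination b*hamu'
        · linear_combination ((μ-l)⁻¹)*hamu'
        · linear_combination (l-μ)*hd'


lemma conj_of_trace_eq (Y W : SL2) (h : Matrix.trace Y.1 = Matrix.trace W.1)
    (h2 : 2 < Matrix.trace Y.1) : ∃ Q : SL2, W = Q * Y * Q⁻¹ := by
  obtain ⟨Q₁, e₁⟩ := conj_diag Y (Matrix.trace Y.1) rfl h2
  obtain ⟨Q₂, e₂⟩ := conj_diag W (Matrix.trace Y.1) h.symm h2
  have hEq : Q₁⁻¹ * Y * Q₁ = Q₂⁻¹ * W * Q₂ := Subtype.ext (e₁.trans e₂.symm)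
  refine ⟨Q₂ * Q₁⁻¹, ?_⟩
  have := congrArg (fun Z => Q₂ * Z * Q₂⁻¹) hEq
  rw [show Q₂ * (Q₂⁻¹ * W * Q₂) * Q₂⁻¹ = W by group] at this
  rw [← this]; group

lemma abs_conj (Y W : SL2) (habs : |Matrix.trace Y.1| = |Matrix.trace W.1|)
    (h2 : 2 < |Matrix.trace Y.1|) :
    ∃ Q : SL2, W = Q * Y * Q⁻¹ ∨ W = nSL (Q * Y * Q⁻¹) := by
  rcases le_or_gt 0 (Matrix.trace Y.1) with hy | hy
  · rw [abs_of_nonneg hy] at habs h2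
    rcases le_or_gt 0 (Matrix.trace W.1) with hw | hw
    · rw [abs_of_nonneg hw] at habs
      obtain ⟨Q, hQ⟩ := conj_of_trace_eq Y W habs h2
      exact ⟨Q, Or.inl hQ⟩
    · rw [abs_of_neg hw] at habs
      have hW' : Matrix.trace Y.1 = Matrix.trace ((nSL W).1) := by
        rw [trace_nSL, habs]
      obtain ⟨Q, hQ⟩ := conj_of_trace_eq Y (nSL W) hW' h2
      refine ⟨Q, Or.inr ?_⟩
      rw [← hQ, nSL_nSL]
  · rw [abs_of_neg hy] at habs h2
    have hy2 : 2 < Matrix.trace ((nSL Y).1) := by rw [trace_nSL]; exact h2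
    rcases le_or_gt 0 (Matrix.trace W.1) with hw | hw
    · rw [abs_of_nonneg hw] at habs
      have hW' : Matrix.trace ((nSL Y).1) = Matrix.trace W.1 := by
        rw [trace_nSL, habs]
      obtain ⟨Q, hQ⟩ := conj_of_trace_eq (nSL Y) W hW' hy2
      refine ⟨Q, Or.inr ?_⟩
      rw [hQ, nSL_conj]
    · rw [abs_of_neg hw] at habs
      have hW' : Matrix.trace ((nSL Y).1) = Matrix.trace ((nSL W).1) := by
        rw [trace_nSL, trace_nSL, habs]
      obtain ⟨Q, hQ⟩ := conj_of_trace_eq (nSL Y) (nSL W) hW' hy2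
      refine ⟨Q, Or.inl ?_⟩
      have := congrArg nSL hQ
      rw [nSL_nSL, nSL_conj, nSL_nSL] at this
      exact this

lemma menu (A B : SL2) (hA : A.1 1 0 ≠ 0) (hB : B.1 1 0 ≠ 0) :
    ∃ N σ : ℝ, (σ = 1 ∨ σ = -1) ∧
      ∀ T, N ≤ T → ∃ P : SL2, Matrix.trace ((A * (P * B * P⁻¹)).1) = σ * T := by
  obtain ⟨N, σ, hσ, hsolve⟩ := quad_solve (-(A.1 1 0 * B.1 1 0))
    (A.1 0 0 * B.1 1 0 + A.1 1 0*(B.1 1 1 - B.1 0 0) - A.1 1 1 * B.1 1 0)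
    (A.1 0 0 * B.1 0 0 + A.1 0 1 * B.1 1 0 + A.1 1 0 * B.1 0 1 + A.1 1 1 * B.1 1 1)
    (by simpa using mul_ne_zero hA hB)
  refine ⟨N, σ, hσ, ?_⟩
  intro T hT
  obtain ⟨m, hm⟩ := hsolve T hT
  exact ⟨mk2 1 m 0 1 (by ring), by rw [trace_form]; exact hm⟩

lemma zchoice (X : SL2) (N₁ N₂ : ℝ) :
    ∃ Z : SL2, (2 < |Matrix.trace ((X*Z).1)| ∧ N₁ ≤ |Matrix.trace ((X*Z).1)|)
      ∧ (2 < |Matrix.trace (Z.1)| ∧ N₂ ≤ |Matrix.trace (Z.1)|) := by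
  have hdet := X.2
  rw [Matrix.det_fin_two] at hdet
  set p := X.1 0 0 with hp
  set q := X.1 0 1 with hq
  set r := X.1 1 0 with hr
  set s := X.1 1 1 with hs
  have htrZ : ∀ (l z : ℝ) (h : l*l⁻¹ - 0*z = 1),
      Matrix.trace ((mk2 l 0 z l⁻¹ h : SL2).1) = l + l⁻¹ := by
    intro l z h
    rw [show ((mk2 l 0 z l⁻¹ h) : SL2).1 = !![l,0;z,l⁻¹] from rfl]
    simp [Matrix.trace_fin_two_of]
  have htrXZ : ∀ (l z : ℝ) (h : l*l⁻¹ - 0*z = 1),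
      Matrix.trace ((X * mk2 l 0 z l⁻¹ h).1) = p*l + q*z + s*l⁻¹ := by
    intro l z h
    rw [Matrix.SpecialLinearGroup.coe_mul,
      show ((mk2 l 0 z l⁻¹ h) : SL2).1 = !![l,0;z,l⁻¹] from rfl,
      Matrix.eta_fin_two X.1]
    simp [Matrix.mul_fin_two, Matrix.trace_fin_two_of]
    rfl
  by_cases hq0 : q ≠ 0
  · set l : ℝ := max 3 N₂ with hl
    clear_value l
    have hl3 : (3:ℝ) ≤ l := by rw [hl]; exact le_max_left _ _
    have hl0 : (0:ℝ) < l := by linarith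
    have hlne : l ≠ 0 := ne_of_gt hl0
    have hdz : l*l⁻¹ - 0*((max 3 N₁ - p*l - s*l⁻¹)/q) = 1 := by
      rw [mul_inv_cancel₀ hlne]; ring
    refine ⟨mk2 l 0 ((max 3 N₁ - p*l - s*l⁻¹)/q) l⁻¹ hdz, ?_, ?_⟩
    · rw [htrXZ]
      have : p*l + q*((max 3 N₁ - p*l - s*l⁻¹)/q) + s*l⁻¹ = max 3 N₁ := by
        field_simp
        ring
      rw [this]
      have h3 : (3:ℝ) ≤ max 3 N₁ := le_max_left _ _
      have hN : N₁ ≤ max 3 N₁ := le_max_right _ _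
      rw [abs_of_nonneg (by linarith)]
      exact ⟨by linarith, hN⟩
    · rw [htrZ]
      have hinv : (0:ℝ) < l⁻¹ := by positivity
      rw [abs_of_nonneg (by linarith)]
      constructor
      · linarith
      · have := le_max_right (3:ℝ) N₂
        linarith
  · push_neg at hq0
    rw [hq0] at hdet
    have hps : p * s = 1 := by linarith [hdet]
    have hpne : p ≠ 0 := by
      intro h; rw [h] at hps; norm_num at hps
    have hpabs : (0:ℝ) < |p| := abs_pos.mpr hpne
    set l : ℝ := (max 3 N₁ + |s|)/|p| + max 3 N₂ with hl
    clear_value l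
    have hfirst : (0:ℝ) < (max 3 N₁ + |s|)/|p| := by
      apply div_pos _ hpabs
      have : (3:ℝ) ≤ max 3 N₁ := le_max_left _ _
      have : (0:ℝ) ≤ |s| := abs_nonneg _
      linarith
    have hl3 : (3:ℝ) ≤ l := by
      have := le_max_left (3:ℝ) N₂
      rw [hl]; linarith
    have hl0 : (0:ℝ) < l := by linarith
    have hlne : l ≠ 0 := ne_of_gt hl0
    have hdz : l*l⁻¹ - 0*(0:ℝ) = 1 := by rw [mul_inv_cancel₀ hlne]; ring
    refine ⟨mk2 l 0 0 l⁻¹ hdz, ?_, ?_⟩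
    · rw [htrXZ, hq0]
      have key : max 3 N₁ ≤ |p*l + 0*0 + s*l⁻¹| := by
        have h1 : |p| * l - |s| * l⁻¹ ≤ |p*l + 0*0 + s*l⁻¹| := by
          have h2 := abs_sub_abs_le_abs_sub (p*l) (-(s*l⁻¹))
          rw [abs_neg, sub_neg_eq_add] at h2
          rw [abs_mul, abs_mul] at h2
          rw [abs_of_pos hl0, abs_of_pos (show (0:ℝ) < l⁻¹ by positivity)] at h2
          calc |p| * l - |s| * l⁻¹ ≤ |p*l + s*l⁻¹| := h2
            _ = |p*l + 0*0 + s*l⁻¹| := by ring_nf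
        have h3 : |s| * l⁻¹ ≤ |s| := by
          have hle1 : l⁻¹ ≤ 1 := by
            rw [inv_le_one_iff₀]; right; linarith
          nlinarith [abs_nonneg s]
        have h4 : max 3 N₁ + |s| ≤ |p| * l := by
          have : |p| * l = (max 3 N₁ + |s|) + |p| * max 3 N₂ := by
            rw [hl]; field_simp
          rw [this]
          have h5 : (0:ℝ) ≤ |p| * max 3 N₂ := by positivity
          linarith
        linarith
      constructor
      · have : (3:ℝ) ≤ max 3 N₁ := le_max_left _ _
        linarith
      · have : N₁ ≤ max 3 N₁ := le_max_right _ _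
        linarith
    · rw [htrZ]
      have hinv : (0:ℝ) < l⁻¹ := by positivity
      rw [abs_of_nonneg (by linarith)]
      constructor
      · linarith
      · have h6 := le_max_right (3:ℝ) N₂
        have h7 : max 3 N₂ ≤ l := by rw [hl]; linarith
        linarith


lemma master (A B C D X : SL2)
    (hA : A ∉ Subgroup.center SL2) (hB : B ∉ Subgroup.center SL2)
    (hC : C ∉ Subgroup.center SL2) (hD : D ∉ Subgroup.center SL2) :
    ∃ R₁ R₂ R₃ R₄ : SL2,
      (R₁*A*R₁⁻¹)*(R₂*B*R₂⁻¹)*((R₃*C*R₃⁻¹)*(R₄*D*R₄⁻¹)) = X ∨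
      (R₁*A*R₁⁻¹)*(R₂*B*R₂⁻¹)*((R₃*C*R₃⁻¹)*(R₄*D*R₄⁻¹)) = nSL X := by
  obtain ⟨PA, hPA⟩ := lowerLeft A hA
  obtain ⟨PB, hPB⟩ := lowerLeft B hB
  obtain ⟨PC, hPC⟩ := lowerLeft C hC
  obtain ⟨PD, hPD⟩ := lowerLeft D hD
  obtain ⟨N₁, σ₁, hσ₁, hmenu₁⟩ := menu (PA*A*PA⁻¹) (PB*B*PB⁻¹) hPA hPB
  obtain ⟨N₂, σ₂, hσ₂, hmenu₂⟩ := menu (PC*C*PC⁻¹) (PD*D*PD⁻¹) hPC hPD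
  obtain ⟨Z, ⟨hXZ2, hXZN⟩, hZ2, hZN⟩ := zchoice X N₁ N₂
  obtain ⟨P₁, hW₁⟩ := hmenu₁ _ hXZN
  obtain ⟨P₂, hW₂⟩ := hmenu₂ _ hZN
  set W₁ := (PA*A*PA⁻¹) * (P₁*(PB*B*PB⁻¹)*P₁⁻¹) with hW₁def
  set W₂ := (PC*C*PC⁻¹) * (P₂*(PD*D*PD⁻¹)*P₂⁻¹) with hW₂def
  have hsig : ∀ σ t : ℝ, (σ = 1 ∨ σ = -1) → |σ * t| = |t| := by
    rintro σ t (rfl|rfl) <;> simp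
  have habs₁ : |Matrix.trace (W₁.1)| = |Matrix.trace ((X*Z).1)| := by
    rw [hW₁, hsig _ _ hσ₁, abs_abs]
  have h2₁ : 2 < |Matrix.trace (W₁.1)| := by rw [habs₁]; exact hXZ2
  obtain ⟨Q₁, hQ₁⟩ := abs_conj W₁ (X*Z) habs₁ h2₁
  have habs₂ : |Matrix.trace (W₂.1)| = |Matrix.trace ((Z⁻¹).1)| := by
    rw [hW₂, hsig _ _ hσ₂, abs_abs, trace_inv]
  have h2₂ : 2 < |Matrix.trace (W₂.1)| := by
    rw [habs₂, trace_inv]; exact hZ2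
  obtain ⟨Q₂, hQ₂⟩ := abs_conj W₂ (Z⁻¹) habs₂ h2₂
  refine ⟨Q₁*PA, Q₁*P₁*PB, Q₂*PC, Q₂*P₂*PD, ?_⟩
  have hgrp₁ : ((Q₁*PA)*A*(Q₁*PA)⁻¹) * ((Q₁*P₁*PB)*B*(Q₁*P₁*PB)⁻¹) = Q₁*W₁*Q₁⁻¹ := by
    rw [hW₁def]; group
  have hgrp₂ : ((Q₂*PC)*C*(Q₂*PC)⁻¹) * ((Q₂*P₂*PD)*D*(Q₂*P₂*PD)⁻¹) = Q₂*W₂*Q₂⁻¹ := by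
    rw [hW₂def]; group
  rw [hgrp₁, hgrp₂]
  rcases hQ₁ with e₁ | e₁ <;> rcases hQ₂ with e₂ | e₂
  · left
    rw [← e₁, ← e₂]; group
  · right
    have e₂' : Q₂*W₂*Q₂⁻¹ = nSL (Z⁻¹) := by
      have := congrArg nSL e₂
      rw [nSL_nSL] at this
      exact this.symm
    rw [← e₁, e₂', nSL_mul_right]
    congr 1
    group
  · right
    have e₁' : Q₁*W₁*Q₁⁻¹ = nSL (X*Z) := by
      have := congrArg nSL e₁
      rw [nSL_nSL] at this
      exact this.symm
    rw [e₁', ← e₂, nSL_mul_left]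
    congr 1
    group
  · left
    have e₁' : Q₁*W₁*Q₁⁻¹ = nSL (X*Z) := by
      have := congrArg nSL e₁
      rw [nSL_nSL] at this
      exact this.symm
    have e₂' : Q₂*W₂*Q₂⁻¹ = nSL (Z⁻¹) := by
      have := congrArg nSL e₂
      rw [nSL_nSL] at this
      exact this.symm
    rw [e₁', e₂', nSL_mul_left, nSL_mul_right, nSL_nSL]
    group


/-! ### PSL level -/

noncomputable def pr : SL2 →* PSL2R := QuotientGroup.mk' (Subgroup.center SL2)

lemma pr_surj : Function.Surjective pr := QuotientGroup.mk'_surjective _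

lemma pr_eq_one_iff (a : SL2) : pr a = 1 ↔ a ∈ Subgroup.center SL2 :=
  QuotientGroup.eq_one_iff a

lemma pr_nSL (W : SL2) : pr (nSL W) = pr W := by
  have h : nSL W = W * nSL 1 := by
    apply Subtype.ext
    simp [nSL, Matrix.SpecialLinearGroup.coe_mul, Matrix.mul_neg]
    show -W.1 = W.1 * (-1); rw [mul_neg, mul_one]
  rw [h, pr.map_mul, (pr_eq_one_iff (nSL 1)).mpr neg_one_center, mul_one]

lemma ext4 : ExtCoverProp PSL2R 4 := by
  intro g hg x
  choose A hA using fun i => pr_surj (g i)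
  obtain ⟨X, hX⟩ := pr_surj x
  have hnc : ∀ i, A i ∉ Subgroup.center SL2 := by
    intro i hmem
    exact hg i (by rw [← hA i]; exact (pr_eq_one_iff _).mpr hmem)
  obtain ⟨R₁, R₂, R₃, R₄, hP⟩ :=
    master (A 0) (A 1) (A 2) (A 3) X (hnc 0) (hnc 1) (hnc 2) (hnc 3)
  set R : Fin 4 → SL2 := ![R₁, R₂, R₃, R₄] with hR
  refine ⟨fun i => pr (R i * A i * (R i)⁻¹), ?_, ?_⟩
  · intro i
    exact isConj_iff.mpr ⟨pr (R i), by
      rw [← hA i]; simp [MonoidHom.map_mul, MonoidHom.map_inv]⟩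
  · have hexp : (List.ofFn fun i => pr (R i * A i * (R i)⁻¹)).prod
        = pr ((R₁*(A 0)*R₁⁻¹) * (R₂*(A 1)*R₂⁻¹) * ((R₃*(A 2)*R₃⁻¹) * (R₄*(A 3)*R₄⁻¹))) := by
      simp [List.ofFn_succ, hR, MonoidHom.map_mul, mul_assoc]
    rw [hexp]
    rcases hP with h | h
    · rw [h, hX]
    · rw [h, pr_nSL, hX]

lemma not3 : ¬ CoverProp PSL2R 3 := by
  intro h
  have hjne : pr jSL ≠ 1 := fun hcontra => jSL_not_center ((pr_eq_one_iff _).mp hcontra)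
  obtain ⟨f, hconj, hprod⟩ := h (pr jSL) hjne 1
  have hMex : ∀ i, ∃ M : SL2, f i = pr (M * jSL * M⁻¹) := by
    intro i
    obtain ⟨c, hc⟩ := isConj_iff.mp (hconj i)
    obtain ⟨M, hM⟩ := pr_surj c
    exact ⟨M, by rw [← hc, ← hM]; simp [MonoidHom.map_mul, MonoidHom.map_inv]⟩
  choose M hM using hMex
  have hSL : pr ((M 0 * jSL * (M 0)⁻¹) * (M 1 * jSL * (M 1)⁻¹) * (M 2 * jSL * (M 2)⁻¹)) = 1 := by
    rw [pr.map_mul, pr.map_mul, ← hM 0, ← hM 1, ← hM 2]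
    rw [← hprod]
    simp [List.ofFn_succ, mul_assoc]
  exact three_j_not_central (M 0) (M 1) (M 2) _ ((pr_eq_one_iff _).mp hSL) rfl

lemma extToCover (G : Type*) [Group G] (n : ℕ) : ExtCoverProp G n → CoverProp G n :=
  fun h g hg x => h (fun _ => g) (fun _ => hg) x

lemma coverSucc (G : Type*) [Group G] (n : ℕ) : CoverProp G n → CoverProp G (n+1) := by
  intro h g hg x
  obtain ⟨f, hconj, hprod⟩ := h g hg (g⁻¹ * x)
  refine ⟨Fin.cons g f, ?_, ?_⟩
  · intro i
    induction i using Fin.cases with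
    | zero =>
      simp only [Fin.cons_zero]
      exact IsConj.refl g
    | succ j =>
      simp only [Fin.cons_succ]
      exact hconj j
  · rw [List.ofFn_succ]
    have hfun : (fun i : Fin n => (Fin.cons g f : Fin (n+1) → G) i.succ) = f := by
      funext j; simp
    simp only [Fin.cons_zero, Fin.cons_succ, List.prod_cons, hfun, hprod]
    group

lemma coverMono (G : Type*) [Group G] {m n : ℕ} (h : m ≤ n) :
    CoverProp G m → CoverProp G n := by
  induction n, h using Nat.le_induction with
  | base => exact id
  | succ n hmn ih => exact fun hc => coverSucc G n (ih hc)

end PSLCover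

theorem psl2r_covering_number_four :
    ExtCoverProp PSL2R 4 ∧
    IsLeast {n : ℕ | CoverProp PSL2R n} 4 ∧
    IsLeast {n : ℕ | ExtCoverProp PSL2R n} 4 := by
  have hext := PSLCover.ext4
  have hcover : CoverProp PSL2R 4 := PSLCover.extToCover _ _ hext
  have hnot3 := PSLCover.not3
  refine ⟨hext, ⟨hcover, ?_⟩, ⟨hext, ?_⟩⟩
  · intro n hn
    by_contra hlt
    push_neg at hlt
    exact hnot3 (PSLCover.coverMono _ (Nat.lt_succ_iff.mp hlt) hn)
  · intro n hn
    by_contra hlt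
    push_neg at hlt
    exact hnot3 (PSLCover.coverMono _ (Nat.lt_succ_iff.mp hlt)
      (PSLCover.extToCover _ _ hn))
end
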